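/- arXiv:2204.10881 — 3 statements merged into one kernel-verified Lean document; each statement's English description precedes it below -/
import Mathlib

section
/- For every integer k ≥ 3 there exist constants C, C' > 0 such that for every ε > 0 and all sufficiently large n the following holds. If p ≥ C·n^{-k/2}/ε², then a random k-XOR instance I ~ F_{k-XOR}(n,p) satisfies, with probability at least 0.99, opt(I) ≤ 1/2 + C'·ε. -/
open MeasureTheory ProbabilityTheory Finset Function Real


open Finset Function

section Comb
variable {k n : ℕ}

/-- every injective tuple factors through a strictly monotone tuple and a permutation -/
lemma exists_factor (α : Fin k → Fin n) (hα : Function.Injective α) :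
    ∃ (β : {a : Fin k → Fin n // StrictMono a}) (σ : Equiv.Perm (Fin k)), α = β.1 ∘ σ := by
  classical
  set s : Finset (Fin n) := Finset.image α Finset.univ with hs
  have hcard : s.card = k := by
    rw [hs, Finset.card_image_of_injective _ hα, Finset.card_univ, Fintype.card_fin]
  set β : Fin k → Fin n := ⇑(s.orderEmbOfFin hcard) with hβ
  have hβmono : StrictMono β := (s.orderEmbOfFin hcard).strictMono
  have hmem : ∀ i, α i ∈ s := fun i => Finset.mem_image.2 ⟨i, Finset.mem_univ i, rfl⟩
  set σ0 : Fin k → Fin k := fun i => (s.orderIsoOfFin hcard).symm ⟨α i, hmem i⟩ with hσ0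
  have hσ0inj : Function.Injective σ0 := by
    intro i j hij
    apply hα
    have h2 : ((s.orderIsoOfFin hcard) (σ0 i) : Fin n)
        = ((s.orderIsoOfFin hcard) (σ0 j) : Fin n) := by rw [hij]
    simpa [hσ0, OrderIso.apply_symm_apply] using h2
  have hσ0bij : Function.Bijective σ0 := (Finite.injective_iff_bijective).1 hσ0inj
  refine ⟨⟨β, hβmono⟩, Equiv.ofBijective σ0 hσ0bij, ?_⟩
  funext i
  show α i = β (σ0 i)
  rw [hβ, ← Finset.coe_orderIsoOfFin_apply, hσ0]
  simp [OrderIso.apply_symm_apply]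

lemma strictMono_factor_unique (β β' : {a : Fin k → Fin n // StrictMono a})
    (σ σ' : Equiv.Perm (Fin k)) (h : β.1 ∘ σ = β'.1 ∘ σ') : β = β' ∧ σ = σ' := by
  classical
  have hrange : Finset.image β.1 Finset.univ = Finset.image β'.1 Finset.univ := by
    ext y
    simp only [Finset.mem_image, Finset.mem_univ, true_and]
    constructor
    · rintro ⟨i, rfl⟩; exact ⟨σ' (σ.symm i), by
        have := congrFun h (σ.symm i); simp at this; rw [← this]⟩
    · rintro ⟨i, rfl⟩; exact ⟨σ (σ'.symm i), by
        have := congrFun h (σ'.symm i); simp at this; rw [this]⟩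
  have hcard : (Finset.image β.1 Finset.univ).card = k := by
    rw [Finset.card_image_of_injective _ β.2.injective, Finset.card_univ, Fintype.card_fin]
  have hcard' : (Finset.image β'.1 Finset.univ).card = k := by
    rw [Finset.card_image_of_injective _ β'.2.injective, Finset.card_univ, Fintype.card_fin]
  have hβeq : β.1 = β'.1 := by
    have h1 : β.1 = (Finset.image β.1 Finset.univ).orderEmbOfFin hcard :=
      Finset.orderEmbOfFin_unique hcard
        (fun i => Finset.mem_image.2 ⟨i, Finset.mem_univ i, rfl⟩) β.2
    have h2 : β'.1 = (Finset.image β.1 Finset.univ).orderEmbOfFin hcard :=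
      Finset.orderEmbOfFin_unique hcard
        (fun i => by rw [hrange]; exact Finset.mem_image.2 ⟨i, Finset.mem_univ i, rfl⟩) β'.2
    rw [h1, h2]
  refine ⟨Subtype.ext hβeq, Equiv.ext fun i => ?_⟩
  have := congrFun h i
  simp only [Function.comp_apply, hβeq] at this
  exact β'.2.injective this

/-- the equivalence between permutation × strictMono pairs and injective tuples -/
noncomputable def factorEquiv (k n : ℕ) :
    (Equiv.Perm (Fin k) × {a : Fin k → Fin n // StrictMono a}) ≃
      {α : Fin k → Fin n // Function.Injective α} := by
  refine Equiv.ofBijective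
    (fun z => ⟨z.2.1 ∘ z.1, z.2.2.injective.comp z.1.injective⟩) ⟨?_, ?_⟩
  · rintro ⟨σ, β⟩ ⟨σ', β'⟩ hz
    have h : β.1 ∘ σ = β'.1 ∘ σ' := congrArg Subtype.val hz
    obtain ⟨h1, h2⟩ := strictMono_factor_unique β β' σ σ' h
    simp [Prod.ext_iff, h1, h2]
  · rintro ⟨α, hα⟩
    obtain ⟨β, σ, h⟩ := exists_factor α hα
    exact ⟨⟨σ, β⟩, by simp [← h]⟩

lemma factorEquiv_apply (k n : ℕ) (z) : ((factorEquiv k n) z).1 = z.2.1 ∘ z.1 := rfl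

/-- key counting lemma -/
lemma sum_tensor_eq {M : Type*} [AddCommMonoid M] (f : (Fin k → Fin n) → M)
    (hsym : ∀ (α : Fin k → Fin n) (σ : Equiv.Perm (Fin k)), f (α ∘ σ) = f α)
    (hzero : ∀ α : Fin k → Fin n, ¬ Function.Injective α → f α = 0) :
    ∑ α : Fin k → Fin n, f α
      = k.factorial • ∑ β : {a : Fin k → Fin n // StrictMono a}, f β.1 := by
  classical
  have h1 : ∑ α : Fin k → Fin n, f α
      = ∑ α ∈ Finset.univ.filter (fun α : Fin k → Fin n => Function.Injective α), f α :=
    (Finset.sum_filter_of_ne (fun α _ hfα => by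
      by_contra hni; exact hfα (hzero α hni))).symm
  have h2 : ∑ α ∈ Finset.univ.filter (fun α : Fin k → Fin n => Function.Injective α), f α
      = ∑ α : {α : Fin k → Fin n // Function.Injective α}, f α.1 :=
    Finset.sum_subtype _ (by simp) _
  have h3 : ∑ α : {α : Fin k → Fin n // Function.Injective α}, f α.1
      = ∑ z : Equiv.Perm (Fin k) × {a : Fin k → Fin n // StrictMono a},
          f ((factorEquiv k n z).1) :=
    (Equiv.sum_comp (factorEquiv k n) (fun α => f α.1)).symm
  rw [h1, h2, h3]
  rw [Fintype.sum_prod_type]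
  have h4 : ∀ σ : Equiv.Perm (Fin k),
      ∑ β : {a : Fin k → Fin n // StrictMono a}, f ((factorEquiv k n (σ, β)).1)
        = ∑ β : {a : Fin k → Fin n // StrictMono a}, f β.1 := by
    intro σ
    refine Finset.sum_congr rfl fun β _ => ?_
    rw [factorEquiv_apply]; exact hsym β.1 σ
  rw [Finset.sum_congr rfl fun σ _ => h4 σ, Finset.sum_const, Finset.card_univ,
    Fintype.card_perm, Fintype.card_fin]

lemma card_injective_eq (k n : ℕ) :
    Fintype.card {α : Fin k → Fin n // Function.Injective α} = n.descFactorial k := by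
  rw [Fintype.card_congr (Equiv.subtypeInjectiveEquivEmbedding (Fin k) (Fin n)),
    Fintype.card_embedding_eq, Fintype.card_fin, Fintype.card_fin]

lemma card_strictMono_eq (k n : ℕ) :
    k.factorial * Fintype.card {a : Fin k → Fin n // StrictMono a} = n.descFactorial k := by
  rw [← card_injective_eq k n, ← Fintype.card_congr (factorEquiv k n),
    Fintype.card_prod, Fintype.card_perm, Fintype.card_fin]

end Comb


open MeasureTheory ProbabilityTheory Real

section Atom
variable {Ω : Type} [MeasurableSpace Ω] (μ : Measure Ω) [IsProbabilityMeasure μ]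
  (Y : Ω → ℝ) (p : ℝ)

/-- the three atoms fill up the space -/
lemma threeAtom_ae (hY : Measurable Y) (hp0 : 0 ≤ p) (hp1 : p ≤ 1)
    (h1 : μ {ω | Y ω = 1} = ENNReal.ofReal (p/2))
    (h2 : μ {ω | Y ω = -1} = ENNReal.ofReal (p/2))
    (h0 : μ {ω | Y ω = 0} = ENNReal.ofReal (1-p)) :
    μ ({ω | Y ω = 1} ∪ {ω | Y ω = -1} ∪ {ω | Y ω = 0})ᶜ = 0 := by
  have mA : MeasurableSet {ω | Y ω = 1} := hY (measurableSet_singleton 1)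
  have mB : MeasurableSet {ω | Y ω = -1} := hY (measurableSet_singleton (-1))
  have mC : MeasurableSet {ω | Y ω = 0} := hY (measurableSet_singleton 0)
  have dAB : Disjoint {ω | Y ω = 1} {ω | Y ω = -1} := by
    rw [Set.disjoint_left]; rintro ω hω1 hω2
    simp only [Set.mem_setOf_eq] at hω1 hω2; rw [hω1] at hω2; norm_num at hω2
  have dABC : Disjoint ({ω | Y ω = 1} ∪ {ω | Y ω = -1}) {ω | Y ω = 0} := by
    rw [Set.disjoint_left]; rintro ω (hω1 | hω1) hω2 <;>
      simp only [Set.mem_setOf_eq] at hω1 hω2 <;> rw [hω1] at hω2 <;> norm_num at hω2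
  have htot : μ ({ω | Y ω = 1} ∪ {ω | Y ω = -1} ∪ {ω | Y ω = 0}) = 1 := by
    rw [measure_union dABC mC, measure_union dAB mB, h1, h2, h0,
      ← ENNReal.ofReal_add (by positivity) (by positivity),
      ← ENNReal.ofReal_add (by positivity) (by linarith)]
    norm_num
  rw [measure_compl ((mA.union mB).union mC) (measure_ne_top μ _), htot]
  simp

/-- integral of a function of a three-atom variable -/
lemma threeAtom_integral (hY : Measurable Y) (hp0 : 0 ≤ p) (hp1 : p ≤ 1)
    (h1 : μ {ω | Y ω = 1} = ENNReal.ofReal (p/2))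
    (h2 : μ {ω | Y ω = -1} = ENNReal.ofReal (p/2))
    (h0 : μ {ω | Y ω = 0} = ENNReal.ofReal (1-p)) (f : ℝ → ℝ) :
    Integrable (fun ω => f (Y ω)) μ ∧
      ∫ ω, f (Y ω) ∂μ = p/2 * f 1 + p/2 * f (-1) + (1-p) * f 0 := by
  have mA : MeasurableSet {ω | Y ω = 1} := hY (measurableSet_singleton 1)
  have mB : MeasurableSet {ω | Y ω = -1} := hY (measurableSet_singleton (-1))
  have mC : MeasurableSet {ω | Y ω = 0} := hY (measurableSet_singleton 0)
  set g : Ω → ℝ := fun ω =>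
    Set.indicator {ω | Y ω = 1} (fun _ => f 1) ω
    + Set.indicator {ω | Y ω = -1} (fun _ => f (-1)) ω
    + Set.indicator {ω | Y ω = 0} (fun _ => f 0) ω with hg
  have hae : (fun ω => f (Y ω)) =ᵐ[μ] g := by
    have hnull := threeAtom_ae μ Y p hY hp0 hp1 h1 h2 h0
    rw [Filter.EventuallyEq, ae_iff]
    refine measure_mono_null (fun ω hω => ?_) hnull
    simp only [Set.mem_setOf_eq] at hω
    simp only [Set.mem_compl_iff, Set.mem_union, Set.mem_setOf_eq]
    rintro (⟨hv | hv⟩ | hv) <;> apply hω <;>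
      simp [hg, Set.indicator_apply, Set.mem_setOf_eq, hv] <;> norm_num
  have hintg : Integrable g μ := by
    refine Integrable.add (Integrable.add ?_ ?_) ?_ <;>
      exact (integrable_const _).indicator (by assumption)
  have hint : Integrable (fun ω => f (Y ω)) μ := hintg.congr hae.symm
  refine ⟨hint, ?_⟩
  rw [integral_congr_ae hae]
  simp only [hg]
  rw [integral_add ?_ ?_, integral_add ?_ ?_,
    integral_indicator_const _ mA, integral_indicator_const _ mB, integral_indicator_const _ mC,
    measureReal_def, measureReal_def, measureReal_def,
    h1, h2, h0, ENNReal.toReal_ofReal (by positivity), ENNReal.toReal_ofReal (by linarith)]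
  · simp only [smul_eq_mul]; try ring
  · exact (integrable_const _).indicator mA
  · exact (integrable_const _).indicator mB
  · exact ((integrable_const _).indicator mA).add ((integrable_const _).indicator mB)
  · exact (integrable_const _).indicator mC

/-- mgf of `c • Y` for `c = ±1` -/
lemma threeAtom_mgf_sign (hY : Measurable Y) (hp0 : 0 ≤ p) (hp1 : p ≤ 1)
    (h1 : μ {ω | Y ω = 1} = ENNReal.ofReal (p/2))
    (h2 : μ {ω | Y ω = -1} = ENNReal.ofReal (p/2))
    (h0 : μ {ω | Y ω = 0} = ENNReal.ofReal (1-p))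
    (c t : ℝ) (hc : c = 1 ∨ c = -1) (ht : |t| ≤ 1) :
    Integrable (fun ω => exp (t * (c * Y ω))) μ ∧
      mgf (fun ω => c * Y ω) μ t ≤ exp (p * t^2) := by
  obtain ⟨hint, hval⟩ := threeAtom_integral μ Y p hY hp0 hp1 h1 h2 h0
    (fun y => exp (t * (c * y)))
  refine ⟨hint, ?_⟩
  have hmgf : mgf (fun ω => c * Y ω) μ t
      = p/2 * exp (t*c) + p/2 * exp (-(t*c)) + (1-p) := by
    rw [mgf]
    rw [hval]
    rcases hc with rfl | rfl <;>
      simp only [mul_one, mul_zero, mul_neg, neg_neg, Real.exp_zero] <;> ring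
  have hexp : exp (t*c) + exp (-(t*c)) ≤ 2 + 2 * t^2 := by
    have habs : |t*c| ≤ 1 := by
      rcases hc with rfl | rfl <;> simpa [abs_mul] using ht
    have hb1 := Real.exp_bound habs (by norm_num : 0 < 2)
    have hb2 := Real.exp_bound (x := -(t*c)) (by simpa using habs) (by norm_num : 0 < 2)
    simp only [Finset.sum_range_succ, Finset.sum_range_zero] at hb1 hb2
    norm_num at hb1 hb2
    have e1 : exp (t*c) ≤ 1 + t*c + (t*c)^2 * (3/4) := by
      linarith [(abs_le.1 hb1).2, show (|t| * |c|)^2 = (t*c)^2 by rw [← abs_mul, sq_abs]]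
    have e2 : exp (-(t*c)) ≤ 1 - t*c + (t*c)^2 * (3/4) := by
      linarith [(abs_le.1 hb2).2, show (|t| * |c|)^2 = (t*c)^2 by rw [← abs_mul, sq_abs]]
    have hc2 : (t*c)^2 = t^2 := by
      rcases hc with rfl | rfl <;> ring_nf <;> norm_num
    nlinarith [e1, e2]
  have step : p/2 * exp (t*c) + p/2 * exp (-(t*c)) + (1-p) ≤ 1 + p * t^2 := by
    nlinarith [hexp]
  calc mgf (fun ω => c * Y ω) μ t ≤ 1 + p * t^2 := by rw [hmgf]; exact step
    _ ≤ exp (p * t^2) := by linarith [Real.add_one_le_exp (p * t^2)]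

/-- mgf of the indicator `1{Y ≠ 0}` at `t = -1` -/
lemma threeAtom_mgf_indicator (hY : Measurable Y) (hp0 : 0 ≤ p) (hp1 : p ≤ 1)
    (h1 : μ {ω | Y ω = 1} = ENNReal.ofReal (p/2))
    (h2 : μ {ω | Y ω = -1} = ENNReal.ofReal (p/2))
    (h0 : μ {ω | Y ω = 0} = ENNReal.ofReal (1-p)) :
    Integrable (fun ω => exp ((-1) * (if Y ω = 0 then (0:ℝ) else 1))) μ ∧
      mgf (fun ω => if Y ω = 0 then (0:ℝ) else 1) μ (-1) ≤ exp (-(5/8) * p) := by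
  obtain ⟨hint, hval⟩ := threeAtom_integral μ Y p hY hp0 hp1 h1 h2 h0
    (fun y => exp ((-1) * (if y = 0 then (0:ℝ) else 1)))
  refine ⟨hint, ?_⟩
  have hmgf : mgf (fun ω => if Y ω = 0 then (0:ℝ) else 1) μ (-1)
      = p * exp (-1) + (1-p) := by
    rw [mgf]
    rw [hval]
    norm_num
    ring
  have hinv : exp (-1) ≤ 3/8 := by
    rw [exp_neg]
    rw [inv_le_comm₀ _ (by norm_num)]
    · calc (3/8 : ℝ)⁻¹ = 8/3 := by norm_num
        _ ≤ 2.7182818283 := by norm_num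
        _ ≤ exp 1 := le_of_lt Real.exp_one_gt_d9
    · exact exp_pos 1
  calc mgf (fun ω => if Y ω = 0 then (0:ℝ) else 1) μ (-1)
      = p * exp (-1) + (1-p) := hmgf
    _ ≤ 1 + (-(5/8) * p) := by nlinarith
    _ ≤ exp (-(5/8) * p) := by linarith [Real.add_one_le_exp (-(5/8) * p)]

end Atom


open Real

lemma two_le_exp_one : (2:ℝ) ≤ exp 1 := by
  have := Real.add_one_le_exp 1; linarith

lemma exp_neg_le_inv200 {x : ℝ} (hx : 100 ≤ x) : exp (-x) ≤ 1/200 := by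
  rw [Real.exp_neg]
  rw [inv_le_comm₀ (Real.exp_pos x) (by norm_num)]
  calc (1/200 : ℝ)⁻¹ = 200 := by norm_num
    _ ≤ 2^100 := by norm_num
    _ ≤ exp 1 ^ 100 := pow_le_pow_left₀ (by norm_num) two_le_exp_one 100
    _ = exp 100 := by
        rw [← Real.exp_nat_mul]; norm_num
    _ ≤ exp x := Real.exp_le_exp.2 hx

lemma pow_mul_exp_le {n : ℕ} (hn : 1 ≤ n) : (2:ℝ)^n * exp (-(12*(n:ℝ))) ≤ 1/200 := by
  have key : (200:ℝ) * 2^n ≤ exp (12*(n:ℝ)) := by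
    calc (200:ℝ) * 2^n ≤ 2^11 * 2^n := by norm_num
      _ = 2^(11 + n) := by rw [pow_add]
      _ ≤ 2^(12*n) := by
          apply pow_le_pow_right₀ (by norm_num)
          omega
      _ ≤ exp 1 ^ (12*n) := pow_le_pow_left₀ (by positivity) two_le_exp_one _
      _ = exp (12*(n:ℝ)) := by
          rw [← Real.exp_nat_mul]
          push_cast; ring_nf
  rw [Real.exp_neg]
  rw [mul_inv_le_iff₀ (Real.exp_pos _)]
  nlinarith [key, pow_pos (by norm_num : (0:ℝ) < 2) n]

lemma sqrt36 : (36:ℝ)^((1:ℝ)/2) = 6 := by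
  have h1 : (36:ℝ) = (6:ℝ)^(2:ℝ) := by
    rw [show (2:ℝ) = ((2:ℕ):ℝ) by norm_num, Real.rpow_natCast]; norm_num
  rw [h1, ← Real.rpow_mul (by norm_num : (0:ℝ) ≤ 6)]
  norm_num


set_option maxHeartbeats 1000000 in
open scoped Classical in
/-- **Strong refutation of random k-XOR** (Theorem 1.1 / 5.1).
For every `k ≥ 3` there are constants `C, C' > 0` such that for every `ε > 0` and all
sufficiently large `n`: if `p ≥ C·n^{-k/2}/ε²`, then a random `k`-XOR instance
(given by a random symmetric tensor `T` with entries `0, ±1` as described, independent up to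
symmetry) satisfies `opt(I) ≤ 1/2 + C'·ε` with probability at least `0.99`.
Here `opt(I) ≤ 1/2 + C'·ε` is expressed as: for every `x ∈ {±1}^n`,
`∑_α T_α x^α ≤ C'·ε·(2m)` where `m = #{α : T_α ≠ 0}`. -/
theorem strong_refutation_kxor (k : ℕ) (hk : 3 ≤ k) :
    ∃ C C' : ℝ, 0 < C ∧ 0 < C' ∧
      ∀ ε : ℝ, 0 < ε →
      ∃ N : ℕ, ∀ n : ℕ, N ≤ n →
      ∀ p : ℝ, C * (n : ℝ) ^ (-(k : ℝ) / 2) / ε ^ 2 ≤ p →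
      ∀ (Ω : Type) (_ : MeasurableSpace Ω) (μ : Measure Ω), IsProbabilityMeasure μ →
      ∀ T : Ω → (Fin k → Fin n) → ℝ,
        Measurable T →
        -- `T` is a symmetric tensor
        (∀ ω (α : Fin k → Fin n) (σ : Equiv.Perm (Fin k)), T ω (α ∘ σ) = T ω α) →
        -- entries with non-distinct indices vanish
        (∀ ω (α : Fin k → Fin n), ¬ Function.Injective α → T ω α = 0) →
        -- marginal distribution of each entry with distinct indices
        (∀ α : Fin k → Fin n, Function.Injective α →
          μ {ω | T ω α = 1} = ENNReal.ofReal (p / 2) ∧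
          μ {ω | T ω α = -1} = ENNReal.ofReal (p / 2) ∧
          μ {ω | T ω α = 0} = ENNReal.ofReal (1 - p)) →
        -- entries are independent up to symmetry
        iIndepFun
          (fun (β : {α : Fin k → Fin n // StrictMono α}) (ω : Ω) => T ω β.1) μ →
        ENNReal.ofReal 0.99 ≤
          μ {ω | ∀ x : Fin n → ℝ, (∀ i, x i = 1 ∨ x i = -1) →
              (∑ α : Fin k → Fin n, T ω α * ∏ i, x (α i)) ≤
                C' * ε *
                  (2 * ((univ.filter fun α : Fin k → Fin n => T ω α ≠ 0).card : ℝ)) } := by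
  classical
  refine ⟨(2:ℝ)^k * (k.factorial : ℝ) * 8, 1, by positivity, one_pos, ?_⟩
  intro ε hε
  refine ⟨max (max (2*k) 36) (Nat.ceil ((100:ℝ) * ε^2) + 1), ?_⟩
  intro n hn p hp Ω mΩ μ hμ T hTmeas hsym hvanish hmarg hindep
  -- basic sizes
  have hn2k : 2*k ≤ n := le_trans (le_trans (le_max_left _ _) (le_max_left _ _)) hn
  have hn36 : 36 ≤ n := le_trans (le_trans (le_max_right _ _) (le_max_left _ _)) hn
  have hkn : k ≤ n := by omega
  have hnceil : Nat.ceil ((100:ℝ)*ε^2) + 1 ≤ n := le_trans (le_max_right _ _) hn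
  have hn0 : (0:ℝ) < (n:ℝ) := by
    have : (36:ℝ) ≤ (n:ℝ) := by exact_mod_cast hn36
    linarith
  have hn1 : (1:ℝ) ≤ (n:ℝ) := by
    have : (36:ℝ) ≤ (n:ℝ) := by exact_mod_cast hn36
    linarith
  -- positivity of p
  have hq0 : (0:ℝ) < (n:ℝ)^(-(k:ℝ)/2) := Real.rpow_pos_of_pos hn0 _
  have hppos : (0:ℝ) < p := by
    refine lt_of_lt_of_le ?_ hp
    positivity
  -- p ≤ 1
  have hα₀mono : StrictMono (Fin.castLE hkn) := Fin.strictMono_castLE hkn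
  obtain ⟨hm1, hm2, hm0⟩ := hmarg (Fin.castLE hkn) hα₀mono.injective
  have hmeasev : ∀ (α : Fin k → Fin n) (c : ℝ), MeasurableSet {ω | T ω α = c} :=
    fun α c => ((measurable_pi_apply α).comp hTmeas) (measurableSet_singleton c)
  have hp1 : p ≤ 1 := by
    have hdisj : Disjoint {ω | T ω (Fin.castLE hkn) = 1} {ω | T ω (Fin.castLE hkn) = -1} := by
      rw [Set.disjoint_left]
      intro ω h1 h2
      simp only [Set.mem_setOf_eq] at h1 h2
      rw [h1] at h2; norm_num at h2
    have hle : ENNReal.ofReal p ≤ 1 := by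
      calc ENNReal.ofReal p = ENNReal.ofReal (p/2) + ENNReal.ofReal (p/2) := by
            rw [← ENNReal.ofReal_add (by positivity) (by positivity)]; norm_num
        _ = μ ({ω | T ω (Fin.castLE hkn) = 1} ∪ {ω | T ω (Fin.castLE hkn) = -1}) := by
            rw [measure_union hdisj (hmeasev _ _), hm1, hm2]
        _ ≤ 1 := prob_le_one
    exact (ENNReal.ofReal_le_one).1 hle
  have hp0 : (0:ℝ) ≤ p := hppos.le
  -- the independent coordinates
  have hYmeas : ∀ β : {a : Fin k → Fin n // StrictMono a}, Measurable (fun ω => T ω β.1) :=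
    fun β => (measurable_pi_apply β.1).comp hTmeas
  -- cardinality facts
  set M := Fintype.card {a : Fin k → Fin n // StrictMono a} with hM
  have hMfact : (k.factorial : ℝ) * (M:ℝ) = (n.descFactorial k : ℝ) := by
    exact_mod_cast congrArg (fun m : ℕ => (m:ℝ)) (card_strictMono_eq k n)
  have hdesc : ((n:ℝ)/2)^k ≤ (n.descFactorial k : ℝ) := by
    rw [Nat.descFactorial_eq_prod_range]
    push_cast
    calc ((n:ℝ)/2)^k = ∏ _i ∈ Finset.range k, ((n:ℝ)/2) := by
          rw [Finset.prod_const, Finset.card_range]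
      _ ≤ ∏ i ∈ Finset.range k, ((n:ℝ) - (i:ℝ)) := by
          refine Finset.prod_le_prod (fun i _ => by positivity) (fun i hi => ?_)
          have hik : i < k := Finset.mem_range.1 hi
          have h2i : 2*i ≤ n := by omega
          have : (2*i : ℝ) ≤ (n:ℝ) := by exact_mod_cast h2i
          linarith
      _ = ∏ i ∈ Finset.range k, (((n - i : ℕ)):ℝ) := by
          refine Finset.prod_congr rfl (fun i hi => ?_)
          have hik : i < k := Finset.mem_range.1 hi
          have : i ≤ n := by omega
          rw [Nat.cast_sub this]
      _ = _ := by push_cast; ring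
  have hMlow : (n:ℝ)^k ≤ 2^k * ((k.factorial : ℝ) * (M:ℝ)) := by
    rw [hMfact]
    have h2 : ((n:ℝ)/2)^k * 2^k = (n:ℝ)^k := by
      rw [div_pow, div_mul_cancel₀]
      positivity
    nlinarith [hdesc, pow_pos (by norm_num : (0:ℝ) < 2) k]
  -- rpow facts
  set r : ℝ := (n:ℝ)^((k:ℝ)/2) with hr
  have hrpow : (n:ℝ)^(k:ℕ) * (n:ℝ)^(-(k:ℝ)/2) = r := by
    rw [← Real.rpow_natCast (n:ℝ) k, ← Real.rpow_add hn0, hr]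
    congr 1; ring
  have hrn : (n:ℝ) ≤ r := by
    have h1 : (n:ℝ)^((1:ℝ)) ≤ (n:ℝ)^((k:ℝ)/2) := by
      apply Real.rpow_le_rpow_of_exponent_le hn1
      have : (3:ℝ) ≤ (k:ℝ) := by exact_mod_cast hk
      linarith
    rwa [Real.rpow_one] at h1
  have hr32 : 6*(n:ℝ) ≤ r := by
    have h32 : (n:ℝ)^((3:ℝ)/2) ≤ r := by
      apply Real.rpow_le_rpow_of_exponent_le hn1
      have : (3:ℝ) ≤ (k:ℝ) := by exact_mod_cast hk
      linarith
    have hsplit : (n:ℝ)^((3:ℝ)/2) = (n:ℝ) * (n:ℝ)^((1:ℝ)/2) := by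
      rw [show (3:ℝ)/2 = 1 + 1/2 by norm_num, Real.rpow_add hn0, Real.rpow_one]
    have hsq : (6:ℝ) ≤ (n:ℝ)^((1:ℝ)/2) := by
      rw [← sqrt36]
      apply Real.rpow_le_rpow (by norm_num) (by exact_mod_cast hn36) (by norm_num)
    nlinarith [hn0]
  -- main lower bound on M * p
  have hMp : 8 * r / ε^2 ≤ (M:ℝ) * p := by
    have h3 : (n:ℝ)^(k:ℕ) * (8 * (n:ℝ)^(-(k:ℝ)/2) / ε^2)
        ≤ (2^k * ((k.factorial:ℝ) * (M:ℝ))) * (8 * (n:ℝ)^(-(k:ℝ)/2) / ε^2) :=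
      mul_le_mul_of_nonneg_right hMlow (by positivity)
    have h4 : (n:ℝ)^(k:ℕ) * (8 * (n:ℝ)^(-(k:ℝ)/2) / ε^2) = 8 * r / ε^2 := by
      rw [← hrpow]; ring
    have h5 : (2^k * ((k.factorial:ℝ) * (M:ℝ))) * (8 * (n:ℝ)^(-(k:ℝ)/2) / ε^2)
        = (M:ℝ) * ((2:ℝ)^k * (k.factorial:ℝ) * 8 * (n:ℝ)^(-(k:ℝ)/2) / ε^2) := by ring
    have h6 : (M:ℝ) * ((2:ℝ)^k * (k.factorial:ℝ) * 8 * (n:ℝ)^(-(k:ℝ)/2) / ε^2)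
        ≤ (M:ℝ) * p := mul_le_mul_of_nonneg_left hp (Nat.cast_nonneg M)
    linarith [h3, h6, h4.symm.le, h5.le]
  have hce : (100:ℝ)*ε^2 ≤ (n:ℝ) := by
    have h1 := Nat.le_ceil ((100:ℝ)*ε^2)
    have h2 : ((Nat.ceil ((100:ℝ)*ε^2) : ℕ) : ℝ) + 1 ≤ (n:ℝ) := by exact_mod_cast hnceil
    linarith
  have hMp800 : (800:ℝ) ≤ (M:ℝ)*p := by
    have h800 : (800:ℝ) * ε^2 ≤ 8 * r := by nlinarith [hrn, hce]
    have : (800:ℝ) ≤ 8 * r / ε^2 := (le_div_iff₀ (by positivity)).2 h800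
    linarith [hMp]
  have hMpe : 8 * r ≤ ε^2 * ((M:ℝ)*p) := by
    have := (div_le_iff₀ (show (0:ℝ) < ε^2 by positivity)).1 hMp
    linarith
  -- pointwise facts
  have hpoint : ∀ ω, (∀ β : {a : Fin k → Fin n // StrictMono a},
        T ω β.1 = 1 ∨ T ω β.1 = -1 ∨ T ω β.1 = 0) →
      ∀ α, T ω α = 1 ∨ T ω α = -1 ∨ T ω α = 0 := by
    intro ω hω α
    by_cases hinj : Function.Injective α
    · obtain ⟨β, σ, rfl⟩ := exists_factor α hinj
      rw [hsym]; exact hω β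
    · right; right; exact hvanish ω α hinj
  have habs : ∀ ω, (∀ α, T ω α = 1 ∨ T ω α = -1 ∨ T ω α = 0) →
      ∀ x : Fin n → ℝ, (∀ i, x i = 1 ∨ x i = -1) →
      (∑ α : Fin k → Fin n, T ω α * ∏ i, x (α i)) ≤
        ((Finset.univ.filter fun α : Fin k → Fin n => T ω α ≠ 0).card : ℝ) := by
    intro ω hω x hx
    have hxabs : ∀ α : Fin k → Fin n, |∏ i, x (α i)| = 1 := by
      intro α; rw [Finset.abs_prod]
      refine Finset.prod_eq_one fun i _ => ?_
      rcases hx (α i) with h | h <;> rw [h] <;> norm_num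
    have hsb : (∑ α : Fin k → Fin n, if T ω α ≠ 0 then (1:ℝ) else 0)
        = ((Finset.univ.filter fun α : Fin k → Fin n => T ω α ≠ 0).card : ℝ) := by
      rw [Finset.sum_boole]
    rw [← hsb]
    refine Finset.sum_le_sum fun α _ => ?_
    rcases hω α with h | h | h <;> rw [h]
    · simp only [ne_eq, one_ne_zero, not_false_eq_true, if_true, one_mul]
      calc ∏ i, x (α i) ≤ |∏ i, x (α i)| := le_abs_self _
        _ = 1 := hxabs α
    · simp only [ne_eq, neg_eq_zero, one_ne_zero, not_false_eq_true, if_true]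
      calc (-1) * ∏ i, x (α i) ≤ |∏ i, x (α i)| := by
            rw [neg_one_mul]; exact neg_le_abs _
        _ = 1 := hxabs α
    · simp
  -- the a.s. support sets
  set D : Set Ω := ⋂ β : {a : Fin k → Fin n // StrictMono a},
      ({ω | T ω β.1 = 1} ∪ {ω | T ω β.1 = -1} ∪ {ω | T ω β.1 = 0}) with hD
  have hDmeas : MeasurableSet D :=
    MeasurableSet.iInter fun β => ((hmeasev _ 1).union (hmeasev _ (-1))).union (hmeasev _ 0)
  have hDc : μ Dᶜ = 0 := by
    rw [hD, Set.compl_iInter]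
    refine measure_iUnion_null fun β => ?_
    exact threeAtom_ae μ (fun ω => T ω β.1) p (hYmeas β) hp0 hp1
      (hmarg β.1 β.2.injective).1 (hmarg β.1 β.2.injective).2.1 (hmarg β.1 β.2.injective).2.2
  have hDfull : μ D = 1 := by
    have := measure_add_measure_compl (μ := μ) hDmeas
    rw [hDc, add_zero, measure_univ] at this
    exact this
  have hDmem : ∀ ω ∈ D, ∀ α, T ω α = 1 ∨ T ω α = -1 ∨ T ω α = 0 := by
    intro ω hω
    refine hpoint ω (fun β => ?_)
    have := Set.mem_iInter.1 hω β
    rcases this with (h | h) | h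
    · exact Or.inl h
    · exact Or.inr (Or.inl h)
    · exact Or.inr (Or.inr h)
  rcases le_or_gt (1/2 : ℝ) ε with hhalf | hhalf
  · -- trivial case: ε ≥ 1/2
    have hsub : D ⊆ {ω | ∀ x : Fin n → ℝ, (∀ i, x i = 1 ∨ x i = -1) →
        (∑ α : Fin k → Fin n, T ω α * ∏ i, x (α i)) ≤
          1 * ε * (2 * ((Finset.univ.filter fun α : Fin k → Fin n => T ω α ≠ 0).card : ℝ))} := by
      intro ω hω x hx
      have h1 := habs ω (hDmem ω hω) x hx
      have hcard0 : (0:ℝ) ≤ ((Finset.univ.filter fun α : Fin k → Fin n => T ω α ≠ 0).card : ℝ) :=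
        Nat.cast_nonneg _
      nlinarith [h1, hcard0]
    calc ENNReal.ofReal 0.99 ≤ 1 := ENNReal.ofReal_le_one.2 (by norm_num)
      _ = μ D := hDfull.symm
      _ ≤ _ := measure_mono hsub
  · -- main case: ε < 1/2
    -- sign vectors
    set c : (Fin n → Bool) → {a : Fin k → Fin n // StrictMono a} → ℝ :=
      fun s β => ∏ i, (if s (β.1 i) then (1:ℝ) else -1) with hcdef
    have hc : ∀ s β, c s β = 1 ∨ c s β = -1 := by
      intro s β
      refine Finset.prod_induction _ (fun y => y = 1 ∨ y = -1) ?_ (Or.inl rfl) ?_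
      · rintro a b (rfl|rfl) (rfl|rfl) <;> norm_num
      · intro i _; by_cases h : s (β.1 i) <;> simp [h]
    have hval : ∀ β : {a : Fin k → Fin n // StrictMono a},
        μ {ω | T ω β.1 = 1} = ENNReal.ofReal (p/2) ∧
        μ {ω | T ω β.1 = -1} = ENNReal.ofReal (p/2) ∧
        μ {ω | T ω β.1 = 0} = ENNReal.ofReal (1-p) := fun β => hmarg β.1 β.2.injective
    have ht0abs : |ε/2| ≤ 1 := by rw [abs_of_pos (by positivity)]; linarith
    -- the signed sums
    have hsign : ∀ (s : Fin n → Bool) (β : {a : Fin k → Fin n // StrictMono a}),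
        Integrable (fun ω => Real.exp ((ε/2) * (c s β * T ω β.1))) μ ∧
        mgf (fun ω => c s β * T ω β.1) μ (ε/2) ≤ Real.exp (p * (ε/2)^2) :=
      fun s β => threeAtom_mgf_sign μ (fun ω => T ω β.1) p (hYmeas β) hp0 hp1
        (hval β).1 (hval β).2.1 (hval β).2.2 (c s β) (ε/2) (hc s β) ht0abs
    have hXmeas : ∀ (s : Fin n → Bool) (β : {a : Fin k → Fin n // StrictMono a}),
        Measurable (fun ω => c s β * T ω β.1) := fun s β => (hYmeas β).const_mul _
    have hXindep : ∀ s : Fin n → Bool, iIndepFun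
        (fun (β : {a : Fin k → Fin n // StrictMono a}) (ω : Ω) => c s β * T ω β.1) μ := by
      intro s
      exact hindep.comp (fun β (y : ℝ) => c s β * y) (fun β => measurable_id.const_mul _)
    have hchern : ∀ s : Fin n → Bool,
        μ {ω | ε*((M:ℝ)*p) ≤ (∑ β : {a : Fin k → Fin n // StrictMono a},
            fun ω => c s β * T ω β.1) ω}
          ≤ ENNReal.ofReal (Real.exp (-(ε^2*((M:ℝ)*p))/4)) := by
      intro s
      have hint : Integrable (fun ω => Real.exp ((ε/2) *
          (∑ β : {a : Fin k → Fin n // StrictMono a}, fun ω => c s β * T ω β.1) ω)) μ :=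
        (hXindep s).integrable_exp_mul_sum (fun β => hXmeas s β) (fun β _ => (hsign s β).1)
      have h1 := measure_ge_le_exp_mul_mgf (μ := μ) (ε*((M:ℝ)*p)) (by positivity) hint
      have h2 := (hXindep s).mgf_sum (fun β => hXmeas s β) Finset.univ (t := ε/2)
      have h3 : ∏ β : {a : Fin k → Fin n // StrictMono a},
          mgf (fun ω => c s β * T ω β.1) μ (ε/2)
          ≤ ∏ _β : {a : Fin k → Fin n // StrictMono a}, Real.exp (p * (ε/2)^2) :=
        Finset.prod_le_prod (fun β _ => mgf_nonneg) (fun β _ => (hsign s β).2)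
      have h4 : ∏ _β : {a : Fin k → Fin n // StrictMono a}, Real.exp (p * (ε/2)^2)
          = Real.exp ((M:ℝ) * (p * (ε/2)^2)) := by
        rw [Finset.prod_const, Finset.card_univ, ← Real.exp_nat_mul, ← hM]
      have h5 : Real.exp (-(ε/2) * (ε*((M:ℝ)*p))) * Real.exp ((M:ℝ) * (p * (ε/2)^2))
          = Real.exp (-(ε^2*((M:ℝ)*p))/4) := by
        rw [← Real.exp_add]; congr 1; ring
      have h6 : (μ {ω | ε*((M:ℝ)*p) ≤ (∑ β : {a : Fin k → Fin n // StrictMono a},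
          fun ω => c s β * T ω β.1) ω}).toReal ≤ Real.exp (-(ε^2*((M:ℝ)*p))/4) := by
        calc _ ≤ Real.exp (-(ε/2) * (ε*((M:ℝ)*p)))
              * mgf (∑ β : {a : Fin k → Fin n // StrictMono a},
                  fun ω => c s β * T ω β.1) μ (ε/2) := h1
          _ ≤ Real.exp (-(ε/2) * (ε*((M:ℝ)*p))) * Real.exp ((M:ℝ) * (p * (ε/2)^2)) := by
              rw [h2]
              exact mul_le_mul_of_nonneg_left (le_trans h3 h4.le) (Real.exp_pos _).le
          _ = _ := h5
      calc μ {ω | ε*((M:ℝ)*p) ≤ (∑ β : {a : Fin k → Fin n // StrictMono a},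
            fun ω => c s β * T ω β.1) ω}
          = ENNReal.ofReal ((μ {ω | ε*((M:ℝ)*p) ≤ (∑ β : {a : Fin k → Fin n // StrictMono a},
            fun ω => c s β * T ω β.1) ω}).toReal) := (ENNReal.ofReal_toReal (measure_ne_top μ _)).symm
        _ ≤ _ := ENNReal.ofReal_le_ofReal h6
    -- the indicator sums
    set X' : {a : Fin k → Fin n // StrictMono a} → Ω → ℝ :=
      fun β ω => if T ω β.1 = 0 then (0:ℝ) else 1 with hX'def
    have hgmeas : Measurable (fun y : ℝ => if y = 0 then (0:ℝ) else 1) := by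
      refine Measurable.ite ?_ measurable_const measurable_const
      rw [show {a : ℝ | a = 0} = {(0:ℝ)} from Set.setOf_eq_eq_singleton]
      exact measurableSet_singleton 0
    have hX'meas : ∀ β, Measurable (X' β) := fun β => hgmeas.comp (hYmeas β)
    have hX'indep : iIndepFun X' μ :=
      hindep.comp (fun β (y : ℝ) => if y = 0 then (0:ℝ) else 1) (fun β => hgmeas)
    have hind : ∀ β : {a : Fin k → Fin n // StrictMono a},
        Integrable (fun ω => Real.exp ((-1) * X' β ω)) μ ∧
        mgf (X' β) μ (-1) ≤ Real.exp (-(5/8) * p) :=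
      fun β => threeAtom_mgf_indicator μ (fun ω => T ω β.1) p (hYmeas β) hp0 hp1
        (hval β).1 (hval β).2.1 (hval β).2.2
    have hchern' : μ {ω | (∑ β : {a : Fin k → Fin n // StrictMono a}, X' β) ω ≤ (M:ℝ)*p/2}
        ≤ ENNReal.ofReal (Real.exp (-((M:ℝ)*p/8))) := by
      have hint : Integrable (fun ω => Real.exp ((-1) *
          (∑ β : {a : Fin k → Fin n // StrictMono a}, X' β) ω)) μ :=
        hX'indep.integrable_exp_mul_sum (fun β => hX'meas β) (fun β _ => (hind β).1)
      have h1 := measure_le_le_exp_mul_mgf (μ := μ) ((M:ℝ)*p/2)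
        (by norm_num : (-1:ℝ) ≤ 0) hint
      have h2 := hX'indep.mgf_sum (fun β => hX'meas β) Finset.univ (t := (-1:ℝ))
      have h3 : ∏ β : {a : Fin k → Fin n // StrictMono a}, mgf (X' β) μ (-1)
          ≤ ∏ _β : {a : Fin k → Fin n // StrictMono a}, Real.exp (-(5/8) * p) :=
        Finset.prod_le_prod (fun β _ => mgf_nonneg) (fun β _ => (hind β).2)
      have h4 : ∏ _β : {a : Fin k → Fin n // StrictMono a}, Real.exp (-(5/8) * p)
          = Real.exp ((M:ℝ) * (-(5/8) * p)) := by
        rw [Finset.prod_const, Finset.card_univ, ← Real.exp_nat_mul, ← hM]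
      have h5 : Real.exp (-(-1) * ((M:ℝ)*p/2)) * Real.exp ((M:ℝ) * (-(5/8) * p))
          = Real.exp (-((M:ℝ)*p/8)) := by
        rw [← Real.exp_add]; congr 1; ring
      have h6 : (μ {ω | (∑ β : {a : Fin k → Fin n // StrictMono a}, X' β) ω ≤ (M:ℝ)*p/2}).toReal
          ≤ Real.exp (-((M:ℝ)*p/8)) := by
        calc _ ≤ Real.exp (-(-1) * ((M:ℝ)*p/2))
              * mgf (∑ β : {a : Fin k → Fin n // StrictMono a}, X' β) μ (-1) := h1
          _ ≤ Real.exp (-(-1) * ((M:ℝ)*p/2)) * Real.exp ((M:ℝ) * (-(5/8) * p)) := by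
              rw [h2]
              exact mul_le_mul_of_nonneg_left (le_trans h3 h4.le) (Real.exp_pos _).le
          _ = _ := h5
      calc μ {ω | (∑ β : {a : Fin k → Fin n // StrictMono a}, X' β) ω ≤ (M:ℝ)*p/2}
          = ENNReal.ofReal ((μ {ω | (∑ β : {a : Fin k → Fin n // StrictMono a}, X' β) ω
              ≤ (M:ℝ)*p/2}).toReal) := (ENNReal.ofReal_toReal (measure_ne_top μ _)).symm
        _ ≤ _ := ENNReal.ofReal_le_ofReal h6
    -- assemble the bad event
    set BadS : (Fin n → Bool) → Set Ω := fun s =>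
      {ω | ε*((M:ℝ)*p) ≤ (∑ β : {a : Fin k → Fin n // StrictMono a},
        fun ω => c s β * T ω β.1) ω} with hBadS
    set BadM : Set Ω :=
      {ω | (∑ β : {a : Fin k → Fin n // StrictMono a}, X' β) ω ≤ (M:ℝ)*p/2} with hBadM
    set Bad : Set Ω := Dᶜ ∪ BadM ∪ ⋃ s : Fin n → Bool, BadS s with hBad
    have hBadSmeas : ∀ s, MeasurableSet (BadS s) := by
      intro s
      have hfm : Measurable (fun ω => (∑ β : {a : Fin k → Fin n // StrictMono a},
          fun ω => c s β * T ω β.1) ω) := by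
        simp only [Finset.sum_apply]
        exact Finset.measurable_sum _ (fun β _ => hXmeas s β)
      exact measurableSet_le measurable_const hfm
    have hBadMmeas : MeasurableSet BadM := by
      have hfm : Measurable (fun ω => (∑ β : {a : Fin k → Fin n // StrictMono a}, X' β) ω) := by
        simp only [Finset.sum_apply]
        exact Finset.measurable_sum _ (fun β _ => hX'meas β)
      exact measurableSet_le hfm measurable_const
    have hBadmeas : MeasurableSet Bad :=
      (hDmeas.compl.union hBadMmeas).union (MeasurableSet.iUnion hBadSmeas)
    -- bound on each exponential
    have hexpS : (2:ℝ)^n * Real.exp (-(ε^2*((M:ℝ)*p))/4) ≤ 1/200 := by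
      have hexpo : 12*(n:ℝ) ≤ ε^2*((M:ℝ)*p)/4 := by nlinarith [hMpe, hr32]
      have h1 : Real.exp (-(ε^2*((M:ℝ)*p))/4) ≤ Real.exp (-(12*(n:ℝ))) := by
        apply Real.exp_le_exp.2; linarith
      have h2 := pow_mul_exp_le (n := n) (by omega)
      nlinarith [pow_pos (by norm_num : (0:ℝ) < 2) n, h1, h2]
    have hexpM : Real.exp (-((M:ℝ)*p/8)) ≤ 1/200 :=
      exp_neg_le_inv200 (by linarith [hMp800])
    -- total bad measure
    have hcard2 : Fintype.card (Fin n → Bool) = 2^n := by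
      simp [Fintype.card_fun]
    have hBadBound : μ Bad ≤ ENNReal.ofReal (1/100) := by
      calc μ Bad ≤ μ (Dᶜ ∪ BadM) + μ (⋃ s : Fin n → Bool, BadS s) := measure_union_le _ _
        _ ≤ (μ Dᶜ + μ BadM) + ∑ s : Fin n → Bool, μ (BadS s) := by
            refine add_le_add (measure_union_le _ _) ?_
            have : (⋃ s : Fin n → Bool, BadS s)
                = ⋃ s ∈ (Finset.univ : Finset (Fin n → Bool)), BadS s := by simp
            rw [this]
            exact measure_biUnion_finset_le _ _
        _ ≤ (0 + ENNReal.ofReal (1/200)) + ∑ _s : Fin n → Bool,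
              ENNReal.ofReal (Real.exp (-(ε^2*((M:ℝ)*p))/4)) := by
            refine add_le_add (add_le_add hDc.le
              (le_trans hchern' (ENNReal.ofReal_le_ofReal hexpM))) ?_
            exact Finset.sum_le_sum (fun s _ => hchern s)
        _ = ENNReal.ofReal (1/200)
            + (2^n : ℕ) * ENNReal.ofReal (Real.exp (-(ε^2*((M:ℝ)*p))/4)) := by
            rw [zero_add, Finset.sum_const, Finset.card_univ, hcard2, nsmul_eq_mul]
        _ ≤ ENNReal.ofReal (1/200) + ENNReal.ofReal (1/200) := by
            refine add_le_add le_rfl ?_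
            rw [← ENNReal.ofReal_natCast (2^n), ← ENNReal.ofReal_mul (by positivity)]
            refine ENNReal.ofReal_le_ofReal ?_
            push_cast
            exact hexpS
        _ = ENNReal.ofReal (1/100) := by
            rw [← ENNReal.ofReal_add (by norm_num) (by norm_num)]; norm_num
    -- the good event
    have hGood : ENNReal.ofReal 0.99 ≤ μ Badᶜ := by
      rw [measure_compl hBadmeas (measure_ne_top μ _), measure_univ]
      have h1 : ENNReal.ofReal 0.99 = 1 - ENNReal.ofReal (1/100) := by
        rw [← ENNReal.ofReal_one, ← ENNReal.ofReal_sub _ (by norm_num)]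
        norm_num
      rw [h1]
      exact tsub_le_tsub_left hBadBound 1
    -- the good event is contained in the target event
    refine le_trans hGood (measure_mono ?_)
    intro ω hω
    simp only [hBad, Set.mem_union, Set.mem_iUnion, not_or, not_exists,
      Set.mem_compl_iff, not_not] at hω
    obtain ⟨⟨hωD, hωM⟩, hωS⟩ := hω
    have hωD' : ∀ α, T ω α = 1 ∨ T ω α = -1 ∨ T ω α = 0 := hDmem ω hωD
    intro x hx
    -- choose the sign pattern of x
    set s : Fin n → Bool := fun i => if x i = 1 then true else false with hsdef
    have hxs : ∀ i, (if s i then (1:ℝ) else -1) = x i := by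
      intro i
      rcases hx i with h | h
      · simp [hsdef, h]
      · have hne : x i ≠ 1 := by rw [h]; norm_num
        have hsf : s i = false := by rw [hsdef]; simp only [if_neg hne]
        rw [hsf, h]; norm_num
    have hprod : ∀ β : {a : Fin k → Fin n // StrictMono a},
        (∏ i, x (β.1 i)) = c s β := by
      intro β
      rw [hcdef]
      exact Finset.prod_congr rfl (fun i _ => (hxs (β.1 i)).symm)
    -- rewrite the full sum via strictly monotone tuples
    have hsum1 : (∑ α : Fin k → Fin n, T ω α * ∏ i, x (α i))
        = (k.factorial : ℝ) * ∑ β : {a : Fin k → Fin n // StrictMono a},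
            c s β * T ω β.1 := by
      rw [sum_tensor_eq (fun α => T ω α * ∏ i, x (α i))
        (fun α σ => by
          show T ω (α ∘ ⇑σ) * ∏ i, x ((α ∘ ⇑σ) i) = T ω α * ∏ i, x (α i)
          rw [hsym ω α σ]
          congr 1
          exact Equiv.prod_comp σ (fun i => x (α i)))
        (fun α hα => by
          show T ω α * ∏ i, x (α i) = 0
          rw [hvanish ω α hα, zero_mul])]
      rw [nsmul_eq_mul]
      congr 1
      exact Finset.sum_congr rfl (fun β _ => by rw [hprod β, mul_comm])
    -- rewrite the number of constraints
    have hSm : (∑ β : {a : Fin k → Fin n // StrictMono a},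
        (if T ω β.1 ≠ 0 then (1:ℝ) else 0))
        = (∑ β : {a : Fin k → Fin n // StrictMono a}, X' β) ω := by
      rw [Finset.sum_apply]
      refine Finset.sum_congr rfl (fun β _ => ?_)
      rw [hX'def]
      by_cases h : T ω β.1 = 0 <;> simp [h]
    have hcard : ((Finset.univ.filter fun α : Fin k → Fin n => T ω α ≠ 0).card : ℝ)
        = (k.factorial : ℝ) * (∑ β : {a : Fin k → Fin n // StrictMono a}, X' β) ω := by
      rw [← Finset.sum_boole (s := Finset.univ) (p := fun α : Fin k → Fin n => T ω α ≠ 0)]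
      rw [sum_tensor_eq (fun α => if T ω α ≠ 0 then (1:ℝ) else 0)
        (fun α σ => by
          show (if T ω (α ∘ ⇑σ) ≠ 0 then (1:ℝ) else 0) = (if T ω α ≠ 0 then (1:ℝ) else 0)
          rw [hsym ω α σ])
        (fun α hα => by
          show (if T ω α ≠ 0 then (1:ℝ) else 0) = 0
          simp [hvanish ω α hα])]
      rw [nsmul_eq_mul, hSm]
    -- conclude
    have h1 : (∑ β : {a : Fin k → Fin n // StrictMono a}, c s β * T ω β.1)
        ≤ ε * ((M:ℝ)*p) := by
      have := hωS s
      rw [hBadS] at this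
      simp only [Set.mem_setOf_eq, not_le, Finset.sum_apply] at this
      exact this.le
    have h2 : (M:ℝ)*p ≤ 2 * (∑ β : {a : Fin k → Fin n // StrictMono a}, X' β) ω := by
      rw [hBadM] at hωM
      simp only [Set.mem_setOf_eq, not_le] at hωM
      linarith
    have hfacpos : (0:ℝ) < (k.factorial : ℝ) := by
      exact_mod_cast k.factorial_pos
    calc (∑ α : Fin k → Fin n, T ω α * ∏ i, x (α i))
        = (k.factorial : ℝ) * ∑ β : {a : Fin k → Fin n // StrictMono a},
            c s β * T ω β.1 := hsum1
      _ ≤ (k.factorial : ℝ) * (ε * ((M:ℝ)*p)) :=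
          mul_le_mul_of_nonneg_left h1 hfacpos.le
      _ ≤ (k.factorial : ℝ) * (ε * (2 * (∑ β : {a : Fin k → Fin n // StrictMono a}, X' β) ω)) :=
          mul_le_mul_of_nonneg_left (mul_le_mul_of_nonneg_left h2 hε.le) hfacpos.le
      _ = 1 * ε * (2 * ((k.factorial : ℝ)
            * (∑ β : {a : Fin k → Fin n // StrictMono a}, X' β) ω)) := by ring
      _ = 1 * ε * (2 * ((Finset.univ.filter fun α : Fin k → Fin n => T ω α ≠ 0).card : ℝ)) := by
          rw [hcard]
end

section
/- Let A ∈ ℝ^{n×n} be a symmetric matrix with zero diagonal, with associated non-backtracking matrix B = B(A). Then for every integer z ≥ 2 and every pair of oriented edges e, f of the weighted graph G defined by A, (B^{z-1})_{ef} = Σ_{W ∈ NBW_{ef}^z} σ̃_{e₁^{-1}}·σ̃_{e_z}·√|A_{e₁}·A_{e_z}|·Π_{s=2}^{z-1} A_{e_s}, where NBW_{ef}^z is the set of non-backtracking walks in the complete graph K_n consisting of z directed edges e₁, …, e_z with e₁ = e and e_z = f. -/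
open Matrix

noncomputable section

open scoped Classical

/-- The index type of oriented edges of the weighted graph defined by `A`:
pairs `(u,v)` with `A u v ≠ 0`. -/
def EdgeIdx {n : ℕ} (A : Matrix (Fin n) (Fin n) ℝ) : Type :=
  {e : Fin n × Fin n // A e.1 e.2 ≠ 0}

instance {n : ℕ} (A : Matrix (Fin n) (Fin n) ℝ) : Fintype (EdgeIdx A) :=
  Subtype.fintype _

instance {n : ℕ} (A : Matrix (Fin n) (Fin n) ℝ) : DecidableEq (EdgeIdx A) :=
  Subtype.instDecidableEq

/-- The non-backtracking matrix `B(A)` associated to a symmetric real matrix `A`. -/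
def Bmat {n : ℕ} (A : Matrix (Fin n) (Fin n) ℝ) : Matrix (EdgeIdx A) (EdgeIdx A) ℝ :=
  fun e f =>
    if e.1.2 = f.1.1 ∧ f.1 ≠ (e.1.2, e.1.1) then
      Real.sqrt |A e.1.1 e.1.2 * A f.1.1 f.1.2| *
        (if f.1.1 < e.1.1 ∧ f.1.1 < f.1.2 then
            Real.sign (A e.1.1 e.1.2) * Real.sign (A f.1.1 f.1.2)
          else if f.1.2 < f.1.1 ∧ f.1.1 < e.1.1 then Real.sign (A e.1.1 e.1.2)
          else if e.1.1 < f.1.1 ∧ f.1.1 < f.1.2 then Real.sign (A f.1.1 f.1.2)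
          else 1)
    else 0

/-- The matrix `L(A) = [[0, Q(A)], [Q(A), 0]]`: it sends an oriented edge `e` to its
reversal `e⁻¹` with weight `|A_e|`. -/
def Lmat {n : ℕ} (A : Matrix (Fin n) (Fin n) ℝ) : Matrix (EdgeIdx A) (EdgeIdx A) ℝ :=
  fun e f => if f.1 = (e.1.2, e.1.1) then |A e.1.1 e.1.2| else 0

/-- The matrix `J(A) = [[0, Id], [Id, 0]]`: it sends an oriented edge `e` to its
reversal `e⁻¹` with weight `1`. -/
def Jmat {n : ℕ} (A : Matrix (Fin n) (Fin n) ℝ) : Matrix (EdgeIdx A) (EdgeIdx A) ℝ :=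
  fun e f => if f.1 = (e.1.2, e.1.1) then 1 else 0

/-- The diagonal matrix `D(A)` with `D_{uu} = ∑_w |A_{uw}|`. -/
def Dmat {n : ℕ} (A : Matrix (Fin n) (Fin n) ℝ) : Matrix (Fin n) (Fin n) ℝ :=
  Matrix.diagonal fun u => ∑ w, |A u w|

lemma sign_sq {x : ℝ} (hx : x ≠ 0) : Real.sign x * Real.sign x = 1 := by
  rcases Real.sign_apply_eq_of_ne_zero x hx with h | h <;> rw [h] <;> norm_num

lemma sign_mul_abs' (x : ℝ) : Real.sign x * |x| = x := by
  rcases lt_trichotomy x 0 with h | h | h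
  · rw [Real.sign_of_neg h, abs_of_neg h]; ring
  · simp [h]
  · rw [Real.sign_of_pos h, abs_of_pos h]; ring

/-- endpoint weight -/
def dwt {n : ℕ} (A : Matrix (Fin n) (Fin n) ℝ) (e : EdgeIdx A) : ℝ :=
  (if e.1.2 < e.1.1 then Real.sign (A e.1.2 e.1.1) else 1) * Real.sqrt |A e.1.1 e.1.2|

lemma sqrt_abs_ne (x : ℝ) (hx : x ≠ 0) : Real.sqrt |x| ≠ 0 := by
  rw [Real.sqrt_ne_zero' ]
  exact abs_pos.mpr hx

lemma sign_ne {x : ℝ} (hx : x ≠ 0) : Real.sign x ≠ 0 :=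
  fun h => hx (Real.sign_eq_zero_iff.mp h)

lemma dwt_ne_zero {n : ℕ} {A : Matrix (Fin n) (Fin n) ℝ} (hsym : A.IsSymm) (e : EdgeIdx A) :
    dwt A e ≠ 0 := by
  have h2 : A e.1.2 e.1.1 ≠ 0 := by rw [hsym.apply]; exact e.2
  apply mul_ne_zero
  · split
    · exact sign_ne h2
    · norm_num
  · exact sqrt_abs_ne _ e.2

/-- key scalar identity -/
lemma key_f {n : ℕ} {A : Matrix (Fin n) (Fin n) ℝ} (hsym : A.IsSymm) (hdiag : ∀ i, A i i = 0)
    (f : EdgeIdx A) :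
    A f.1.1 f.1.2 * (dwt A f)⁻¹ =
      (if f.1.1 < f.1.2 then Real.sign (A f.1.1 f.1.2) else 1) * Real.sqrt |A f.1.1 f.1.2| := by
  have hf := f.2
  have hf2 : A f.1.2 f.1.1 ≠ 0 := by rw [hsym.apply]; exact hf
  have hne : f.1.1 ≠ f.1.2 := fun h => hf (h ▸ hdiag f.1.1)
  have hs : Real.sqrt |A f.1.1 f.1.2| ≠ 0 := sqrt_abs_ne _ hf
  have habs : Real.sqrt |A f.1.1 f.1.2| * Real.sqrt |A f.1.1 f.1.2| = |A f.1.1 f.1.2| :=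
    Real.mul_self_sqrt (abs_nonneg _)
  have hAf : A f.1.1 f.1.2 = Real.sign (A f.1.1 f.1.2) * |A f.1.1 f.1.2| := (sign_mul_abs' _).symm
  set s := Real.sqrt |A f.1.1 f.1.2| with hsdef
  rcases lt_or_gt_of_ne hne with h | h
  · rw [dwt, if_neg (asymm h), if_pos h, one_mul]
    rw [mul_inv_eq_iff_eq_mul₀ hs]
    nth_rewrite 1 [hAf]
    rw [← habs]; ring
  · rw [dwt, if_pos h, if_neg (asymm h)]
    have hss : Real.sign (A f.1.2 f.1.1) = Real.sign (A f.1.1 f.1.2) := by rw [hsym.apply]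
    rw [hss, mul_inv_eq_iff_eq_mul₀ (mul_ne_zero (sign_ne hf) hs), one_mul]
    nth_rewrite 1 [hAf]
    rw [← habs]; ring

lemma Bmat_eq {n : ℕ} {A : Matrix (Fin n) (Fin n) ℝ} (hsym : A.IsSymm) (hdiag : ∀ i, A i i = 0)
    (g f : EdgeIdx A) :
    Bmat A g f =
      dwt A g * (if g.1.2 = f.1.1 ∧ f.1.2 ≠ g.1.1 then A f.1.1 f.1.2 else 0) * (dwt A f)⁻¹ := by
  obtain ⟨⟨u, v⟩, hg⟩ := g
  obtain ⟨⟨a, b⟩, hf⟩ := f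
  simp only [Bmat]
  by_cases hva : v = a
  swap
  · rw [if_neg (by simp [hva]), if_neg (by simp [hva]), mul_zero, zero_mul]
  subst hva
  by_cases hbu : b ≠ u
  swap
  · rw [if_neg (by simp [hbu]), if_neg (by simp [hbu]), mul_zero, zero_mul]
  rw [if_pos (show (v, b).1 = (v, b).1 ∧ (v,b) ≠ ((u,v).2, (u,v).1) by simp [hbu])]
  rw [show (if (u,v).2 = (v,b).1 ∧ (v,b).2 ≠ (u,v).1 then A (v,b).1 (v,b).2 else 0) = A v b from
    if_pos ⟨rfl, hbu⟩]
  -- now the sign identity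
  have hgf : A u v ≠ 0 := hg
  have hfv : A v b ≠ 0 := hf
  have huv : u ≠ v := fun h => hgf (h ▸ hdiag v)
  have hvb : v ≠ b := fun h => hfv (h ▸ hdiag v)
  have h1 : |A u v * A v b| = |A u v| * |A v b| := abs_mul _ _
  rw [h1, Real.sqrt_mul (abs_nonneg _)]
  have hk := key_f hsym hdiag (⟨(v, b), hf⟩ : EdgeIdx A)
  dsimp only at hk
  rw [mul_assoc (dwt A ⟨(u, v), hg⟩), hk]
  simp only [dwt]
  have hs1 : Real.sign (A v u) = Real.sign (A u v) := by rw [hsym.apply]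
  -- case analysis
  rcases lt_or_gt_of_ne huv with h2 | h2 <;> rcases lt_or_gt_of_ne hvb with h3 | h3
  · -- u < v, v < b : third branch
    rw [if_neg (by rintro ⟨hh, -⟩; exact absurd h2 (asymm hh)),
        if_neg (by rintro ⟨-, hh⟩; exact absurd h2 (asymm hh)),
        if_pos ⟨h2, h3⟩, if_neg (asymm h2), if_pos h3]
    ring
  · -- u < v, b < v : else branch, RHS = 1 * 1
    rw [if_neg (by rintro ⟨-, hh⟩; exact absurd h3 (asymm hh)),
        if_neg (by rintro ⟨-, hh⟩; exact absurd h2 (asymm hh)),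
        if_neg (by rintro ⟨-, hh⟩; exact absurd h3 (asymm hh)),
        if_neg (asymm h2), if_neg (asymm h3)]
    ring
  · -- v < u, v < b : first branch
    rw [if_pos ⟨h2, h3⟩, if_pos h2, if_pos h3, hs1]
    ring
  · -- v < u, b < v : second branch
    rw [if_neg (by rintro ⟨-, hh⟩; exact absurd h3 (asymm hh)),
        if_pos ⟨h3, h2⟩, if_pos h2, if_neg (asymm h3), hs1]
    ring

def WS {n : ℕ} (A : Matrix (Fin n) (Fin n) ℝ) : ℕ → Fin n → Fin n → Fin n → Fin n → ℝ
  | 0, a, b, c, d => if a = c ∧ b = d then 1 else 0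
  | (k+1), a, b, c, d => ∑ x : Fin n, (if x ≠ a then A b x else 0) * WS A k b x c d

lemma pow_eq_WS {n : ℕ} {A : Matrix (Fin n) (Fin n) ℝ} (hsym : A.IsSymm)
    (hdiag : ∀ i, A i i = 0) :
    ∀ (k : ℕ) (e f : EdgeIdx A),
      (Bmat A ^ k) e f = dwt A e * WS A k e.1.1 e.1.2 f.1.1 f.1.2 * (dwt A f)⁻¹ := by
  intro k
  induction k with
  | zero =>
    intro e f
    rw [pow_zero, Matrix.one_apply, WS]
    by_cases h : e = f
    · subst h
      rw [if_pos rfl, if_pos ⟨rfl, rfl⟩, mul_one,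
        mul_inv_cancel₀ (dwt_ne_zero hsym e)]
    · rw [if_neg h, if_neg (fun hh => h (Subtype.ext (Prod.ext hh.1 hh.2))), mul_zero, zero_mul]
  | succ k ih =>
    intro e f
    rw [pow_succ', Matrix.mul_apply]
    have hterm : ∀ g : EdgeIdx A,
        Bmat A e g * (Bmat A ^ k) g f =
          dwt A e *
            ((if e.1.2 = g.1.1 ∧ g.1.2 ≠ e.1.1 then A g.1.1 g.1.2 else 0) *
              WS A k g.1.1 g.1.2 f.1.1 f.1.2) * (dwt A f)⁻¹ := by
      intro g
      rw [Bmat_eq hsym hdiag, ih]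
      have hg := dwt_ne_zero hsym g
      have key : ∀ a x g y fi : ℝ, g ≠ 0 → a * x * g⁻¹ * (g * y * fi) = a * (x * y) * fi := by
        intro a x g y fi hg
        field_simp
      exact key _ _ _ _ _ hg
    rw [Finset.sum_congr rfl (fun g _ => hterm g)]
    rw [← Finset.sum_mul, ← Finset.mul_sum]
    congr 1
    congr 1
    -- now: ∑ g : EdgeIdx, T g.1 = WS (k+1)
    rw [show WS A (k+1) e.1.1 e.1.2 f.1.1 f.1.2 =
      ∑ x : Fin n, (if x ≠ e.1.1 then A e.1.2 x else 0) * WS A k e.1.2 x f.1.1 f.1.2 from rfl]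
    set T : Fin n × Fin n → ℝ := fun p =>
      (if e.1.2 = p.1 ∧ p.2 ≠ e.1.1 then A p.1 p.2 else 0) * WS A k p.1 p.2 f.1.1 f.1.2 with hT
    have h1 : (∑ g : EdgeIdx A, T g.1) = ∑ p ∈ Finset.univ.filter (fun p : Fin n × Fin n => A p.1 p.2 ≠ 0), T p := by
      exact (Finset.sum_subtype (p := fun p : Fin n × Fin n => A p.1 p.2 ≠ 0)
        (Finset.univ.filter (fun p : Fin n × Fin n => A p.1 p.2 ≠ 0))
        (by intro x; simp) T).symm
    have h2 : ∑ p ∈ Finset.univ.filter (fun p : Fin n × Fin n => A p.1 p.2 ≠ 0), T p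
        = ∑ p : Fin n × Fin n, T p := by
      apply Finset.sum_filter_of_ne
      intro p _ hp
      rw [hT] at hp
      by_contra hA
      apply hp
      simp only
      rw [show (if e.1.2 = p.1 ∧ p.2 ≠ e.1.1 then A p.1 p.2 else 0) = 0 by
        split <;> simp [hA], zero_mul]
    rw [h1, h2, Fintype.sum_prod_type]
    have h3 : ∀ x1 x2 : Fin n, T (x1, x2) =
        if e.1.2 = x1 then (if x2 ≠ e.1.1 then A x1 x2 else 0) * WS A k x1 x2 f.1.1 f.1.2 else 0 := by
      intro x1 x2
      rw [hT]
      by_cases h : e.1.2 = x1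
      · simp [h]
      · simp [h]
    rw [Finset.sum_congr rfl (fun x1 _ => Finset.sum_congr rfl (fun x2 _ => h3 x1 x2))]
    rw [Finset.sum_comm]
    -- inner sum over x1 picks x1 = e.1.2
    refine Finset.sum_congr rfl (fun x2 _ => ?_)
    rw [Finset.sum_ite_eq Finset.univ e.1.2
      (fun x1 => (if x2 ≠ e.1.1 then A x1 x2 else 0) * WS A k x1 x2 f.1.1 f.1.2),
      if_pos (Finset.mem_univ _)]

lemma cons_at {m : ℕ} {β : Type*} (y : β) (w : Fin (m+1) → β) (i : Fin (m+2)) (j : Fin (m+1))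
    (h : (i : ℕ) = (j : ℕ) + 1) : (Fin.cons y w : Fin (m+2) → β) i = w j := by
  have hij : i = Fin.succ j := by
    apply Fin.ext
    simpa using h
  rw [hij, Fin.cons_succ]

lemma WS_eq_sum {n : ℕ} (A : Matrix (Fin n) (Fin n) ℝ) :
    ∀ (k : ℕ) (a b c d : Fin n),
      WS A k a b c d = ∑ v : Fin (k+2) → Fin n,
        if v 0 = a ∧ v 1 = b ∧ v ((Fin.last k).castSucc) = c ∧ v (Fin.last (k+1)) = d ∧
           (∀ t : Fin k, v t.castSucc.castSucc ≠ v t.succ.succ)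
        then ∏ t : Fin k, A (v t.succ.castSucc) (v t.succ.succ) else 0 := by
  intro k
  induction k with
  | zero =>
    intro a b c d
    rw [WS]
    have e1 : (∑ v : Fin (0+2) → Fin n,
        if v 0 = a ∧ v 1 = b ∧ v ((Fin.last 0).castSucc) = c ∧ v (Fin.last (0+1)) = d ∧
           (∀ t : Fin 0, v t.castSucc.castSucc ≠ v t.succ.succ)
        then ∏ t : Fin 0, A (v t.succ.castSucc) (v t.succ.succ) else 0)
        = ∑ p : Fin n × Fin n, (if p.1 = a ∧ p.2 = b ∧ p.1 = c ∧ p.2 = d then (1:ℝ) else 0) := by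
      refine Fintype.sum_equiv (piFinTwoEquiv (fun _ : Fin 2 => Fin n)) _ _ (fun v => ?_)
      have i1 : (Fin.last 0).castSucc = (0 : Fin 2) := rfl
      have i2 : Fin.last (0+1) = (1 : Fin 2) := rfl
      simp [piFinTwoEquiv, i1, i2]
      exact if_congr Iff.rfl rfl rfl
    rw [e1, Fintype.sum_prod_type]
    by_cases h1 : a = c <;> by_cases h2 : b = d
    · subst h1; subst h2
      rw [if_pos ⟨rfl, rfl⟩]
      symm
      simp [ite_and, Finset.sum_ite_eq, Finset.mem_univ]
    · rw [if_neg (by tauto)]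
      refine (Finset.sum_eq_zero fun x _ => Finset.sum_eq_zero fun y _ => ?_).symm
      rw [if_neg (by rintro ⟨rfl, rfl, rfl, rfl⟩; exact h2 rfl)]
    · rw [if_neg (by tauto)]
      refine (Finset.sum_eq_zero fun x _ => Finset.sum_eq_zero fun y _ => ?_).symm
      rw [if_neg (by rintro ⟨rfl, rfl, rfl, rfl⟩; exact h1 rfl)]
    · rw [if_neg (by tauto)]
      refine (Finset.sum_eq_zero fun x _ => Finset.sum_eq_zero fun y _ => ?_).symm
      rw [if_neg (by rintro ⟨rfl, rfl, rfl, rfl⟩; exact h1 rfl)]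
  | succ k ih =>
    intro a b c d
    have collapse : ∀ (u : Fin n) (c : Fin n → ℝ) (Q R : Prop) (_ : Decidable Q) (_ : Decidable R) (P : ℝ),
        (∑ x : Fin n, c x * (if Q ∧ u = x ∧ R then P else 0)) = c u * (if Q ∧ R then P else 0) := by
      intro u c Q R _ _ P
      have hx : ∀ x, c x * (if Q ∧ u = x ∧ R then P else 0) =
          if u = x then (c x * (if Q ∧ R then P else 0)) else 0 := by
        intro x
        by_cases h : u = x
        · subst h
          by_cases h1 : Q ∧ R
          · rw [if_pos ⟨h1.1, rfl, h1.2⟩, if_pos rfl, if_pos h1]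
          · rw [if_neg (fun hh => h1 ⟨hh.1, hh.2.2⟩), if_pos rfl, if_neg h1]
        · rw [if_neg (fun hh => h hh.2.1), if_neg h, mul_zero]
      rw [Finset.sum_congr rfl (fun x _ => hx x),
        Finset.sum_ite_eq Finset.univ u (fun x => c x * (if Q ∧ R then P else 0)),
        if_pos (Finset.mem_univ _)]
    rw [WS]
    rw [Finset.sum_congr rfl (fun x (_ : x ∈ Finset.univ) => by rw [ih b x c d, Finset.mul_sum])]
    rw [Finset.sum_comm]
    rw [Finset.sum_congr rfl (fun w (_ : w ∈ (Finset.univ : Finset (Fin (k+2) → Fin n))) =>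
      collapse (w 1) (fun x => if x ≠ a then A b x else 0)
        (w 0 = b)
        (w ((Fin.last k).castSucc) = c ∧ w (Fin.last (k+1)) = d ∧
          (∀ t : Fin k, w t.castSucc.castSucc ≠ w t.succ.succ))
        (by infer_instance) (by infer_instance)
        (∏ t : Fin k, A (w t.succ.castSucc) (w t.succ.succ)))]
    -- Now transform the RHS
    have eR : (∑ v : Fin (k+1+2) → Fin n,
        if v 0 = a ∧ v 1 = b ∧ v ((Fin.last (k+1)).castSucc) = c ∧ v (Fin.last (k+1+1)) = d ∧
           (∀ t : Fin (k+1), v t.castSucc.castSucc ≠ v t.succ.succ)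
        then ∏ t : Fin (k+1), A (v t.succ.castSucc) (v t.succ.succ) else 0)
        = ∑ w : Fin (k+2) → Fin n,
          (if w 0 = b ∧ w ((Fin.last k).castSucc) = c ∧ w (Fin.last (k+1)) = d ∧
              (a ≠ w 1 ∧ ∀ j : Fin k, w j.castSucc.castSucc ≠ w j.succ.succ)
           then A (w 0) (w 1) * ∏ t : Fin k, A (w t.succ.castSucc) (w t.succ.succ) else 0) := by
      have hFG : ∀ (y : Fin n) (w : Fin (k+2) → Fin n),
          (if y = a then
            (if w 0 = b ∧ w ((Fin.last k).castSucc) = c ∧ w (Fin.last (k+1)) = d ∧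
                (a ≠ w 1 ∧ ∀ j : Fin k, w j.castSucc.castSucc ≠ w j.succ.succ)
             then A (w 0) (w 1) * ∏ t : Fin k, A (w t.succ.castSucc) (w t.succ.succ) else 0)
           else 0)
          = (if (Fin.cons y w : Fin (k+3) → Fin n) 0 = a ∧
               (Fin.cons y w : Fin (k+3) → Fin n) 1 = b ∧
               (Fin.cons y w : Fin (k+3) → Fin n) ((Fin.last (k+1)).castSucc) = c ∧
               (Fin.cons y w : Fin (k+3) → Fin n) (Fin.last (k+1+1)) = d ∧
               (∀ t : Fin (k+1), (Fin.cons y w : Fin (k+3) → Fin n) t.castSucc.castSucc ≠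
                  (Fin.cons y w : Fin (k+3) → Fin n) t.succ.succ)
             then ∏ t : Fin (k+1), A ((Fin.cons y w : Fin (k+3) → Fin n) t.succ.castSucc)
                ((Fin.cons y w : Fin (k+3) → Fin n) t.succ.succ) else 0) := by
        intro y w
        have ec1 : (Fin.cons y w : Fin (k+3) → Fin n) 1 = w 0 := cons_at y w 1 0 (by simp)
        have ec2 : (Fin.cons y w : Fin (k+3) → Fin n) ((Fin.last (k+1)).castSucc)
            = w ((Fin.last k).castSucc) := cons_at y w _ _ (by simp)
        have ec3 : (Fin.cons y w : Fin (k+3) → Fin n) (Fin.last (k+1+1)) = w (Fin.last (k+1)) :=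
          cons_at y w _ _ (by simp)
        have ecp1 : ∀ t : Fin (k+1), (Fin.cons y w : Fin (k+3) → Fin n) t.succ.castSucc
            = w t.castSucc := fun t => cons_at y w _ _ (by simp)
        have ecp2 : ∀ t : Fin (k+1), (Fin.cons y w : Fin (k+3) → Fin n) t.succ.succ
            = w t.succ := fun t => cons_at y w _ _ (by simp)
        rw [Fin.cons_zero, ec1, ec2, ec3]
        simp only [ecp1, ecp2]
        have hprod : (∏ t : Fin (k+1), A (w t.castSucc) (w t.succ))
            = A (w 0) (w 1) * ∏ t : Fin k, A (w t.succ.castSucc) (w t.succ.succ) := by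
          rw [Fin.prod_univ_succ]
          simp only [Fin.castSucc_zero, Fin.succ_zero_eq_one]
        have hnb : (∀ t : Fin (k+1), (Fin.cons y w : Fin (k+3) → Fin n) t.castSucc.castSucc ≠ w t.succ)
            ↔ (y ≠ w 1 ∧ ∀ j : Fin k, w j.castSucc.castSucc ≠ w j.succ.succ) := by
          constructor
          · intro h
            refine ⟨?_, fun j => ?_⟩
            · have h0 := h 0
              simp only [Fin.castSucc_zero, Fin.cons_zero, Fin.succ_zero_eq_one] at h0
              exact h0
            · have hj := h j.succ
              rwa [cons_at y w _ (j.castSucc.castSucc) (by simp)] at hj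
          · rintro ⟨h1, h2⟩ t
            refine Fin.cases ?_ (fun j => ?_) t
            · simpa only [Fin.castSucc_zero, Fin.cons_zero, Fin.succ_zero_eq_one] using h1
            · rw [cons_at y w _ (j.castSucc.castSucc) (by simp)]
              exact h2 j
        by_cases hy : y = a
        · subst hy
          rw [if_pos rfl, hprod]
          refine if_congr ?_ rfl rfl
          constructor
          · rintro ⟨h1, h2, h3, h4, h5⟩
            exact ⟨rfl, h1, h2, h3, hnb.mpr ⟨h4, h5⟩⟩
          · rintro ⟨-, h1, h2, h3, h4⟩
            have := hnb.mp h4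
            exact ⟨h1, h2, h3, this.1, this.2⟩
        · rw [if_neg hy, if_neg (fun hh => hy hh.1)]
      calc (∑ v : Fin (k+1+2) → Fin n,
          if v 0 = a ∧ v 1 = b ∧ v ((Fin.last (k+1)).castSucc) = c ∧ v (Fin.last (k+1+1)) = d ∧
             (∀ t : Fin (k+1), v t.castSucc.castSucc ≠ v t.succ.succ)
          then ∏ t : Fin (k+1), A (v t.succ.castSucc) (v t.succ.succ) else 0)
          = ∑ p : Fin n × (Fin (k+2) → Fin n),
            (if p.1 = a then
              (if p.2 0 = b ∧ p.2 ((Fin.last k).castSucc) = c ∧ p.2 (Fin.last (k+1)) = d ∧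
                  (a ≠ p.2 1 ∧ ∀ j : Fin k, p.2 j.castSucc.castSucc ≠ p.2 j.succ.succ)
               then A (p.2 0) (p.2 1) * ∏ t : Fin k, A (p.2 t.succ.castSucc) (p.2 t.succ.succ) else 0)
             else 0) := by
            refine (Fintype.sum_equiv (Fin.consEquiv (fun _ : Fin (k+3) => Fin n)) _ _
              (fun p => ?_)).symm
            exact hFG p.1 p.2
      _ = ∑ y : Fin n, ∑ w : Fin (k+2) → Fin n,
            (if y = a then
              (if w 0 = b ∧ w ((Fin.last k).castSucc) = c ∧ w (Fin.last (k+1)) = d ∧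
                  (a ≠ w 1 ∧ ∀ j : Fin k, w j.castSucc.castSucc ≠ w j.succ.succ)
               then A (w 0) (w 1) * ∏ t : Fin k, A (w t.succ.castSucc) (w t.succ.succ) else 0)
             else 0) := Fintype.sum_prod_type _
      _ = ∑ y : Fin n, (if y = a then ∑ w : Fin (k+2) → Fin n,
              (if w 0 = b ∧ w ((Fin.last k).castSucc) = c ∧ w (Fin.last (k+1)) = d ∧
                  (a ≠ w 1 ∧ ∀ j : Fin k, w j.castSucc.castSucc ≠ w j.succ.succ)
               then A (w 0) (w 1) * ∏ t : Fin k, A (w t.succ.castSucc) (w t.succ.succ) else 0)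
             else 0) := by
            refine Finset.sum_congr rfl (fun y _ => ?_)
            by_cases hy : y = a
            · simp only [hy, if_true]
            · simp only [hy, if_false, Finset.sum_const_zero]
      _ = _ := by
            rw [Finset.sum_ite_eq' Finset.univ a, if_pos (Finset.mem_univ _)]
    rw [eR]
    -- final per-w comparison
    refine Finset.sum_congr rfl (fun w _ => ?_)
    by_cases h1 : w 1 = a
    · rw [if_neg (show ¬(w 1 ≠ a) from fun hh => hh h1), zero_mul]
      have hnot : ¬(w 0 = b ∧ w ((Fin.last k).castSucc) = c ∧ w (Fin.last (k+1)) = d ∧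
          (a ≠ w 1 ∧ ∀ j : Fin k, w j.castSucc.castSucc ≠ w j.succ.succ)) :=
        fun hh => hh.2.2.2.1 h1.symm
      rw [if_neg hnot]
    · by_cases h2 : w 0 = b ∧ w ((Fin.last k).castSucc) = c ∧ w (Fin.last (k+1)) = d ∧
          (∀ t : Fin k, w t.castSucc.castSucc ≠ w t.succ.succ)
      · rw [if_pos h1, if_pos h2, if_pos ⟨h2.1, h2.2.1, h2.2.2.1, fun hh => h1 hh.symm, h2.2.2.2⟩,
          h2.1]
      · rw [if_neg h2, mul_zero, if_neg (fun hh => h2 ⟨hh.1, hh.2.1, hh.2.2.1, hh.2.2.2.2⟩)]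


set_option maxHeartbeats 2000000 in
/-- **Expansion of powers of the non-backtracking matrix** (Fact 4.6).
For `z ≥ 2` and oriented edges `e, f` of the graph of `A`,
`(B^{z-1})_{ef} = ∑_{W ∈ NBW_{ef}^z} σ̃_{e₁⁻¹}·σ̃_{e_z}·√|A_{e₁}A_{e_z}|·∏_{s=2}^{z-1} A_{e_s}`,
the sum running over non-backtracking walks `v 0, …, v z` in the complete graph `K_n`
with first directed edge `e` and last directed edge `f`. -/
theorem nonbacktracking_power_expansion (n : ℕ) (A : Matrix (Fin n) (Fin n) ℝ)
    (hsym : A.IsSymm) (hdiag : ∀ i, A i i = 0)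
    (z : ℕ) (hz : 2 ≤ z) (e f : EdgeIdx A) :
    (Bmat A ^ (z - 1)) e f =
      ∑ v : Fin (z + 1) → Fin n,
        if -- walk in the complete graph: consecutive vertices are distinct
           (∀ i j : Fin (z + 1), (j : ℕ) = (i : ℕ) + 1 → v i ≠ v j) ∧
           -- non-backtracking
           (∀ i j : Fin (z + 1), (j : ℕ) = (i : ℕ) + 2 → v i ≠ v j) ∧
           -- first directed edge is e, last directed edge is f
           v 0 = e.1.1 ∧ v 1 = e.1.2 ∧
           v (Fin.last z - 1) = f.1.1 ∧ v (Fin.last z) = f.1.2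
        then
          (if v 1 < v 0 then Real.sign (A (v 1) (v 0)) else 1) *
          (if v (Fin.last z - 1) < v (Fin.last z) then
              Real.sign (A (v (Fin.last z - 1)) (v (Fin.last z))) else 1) *
          Real.sqrt |A (v 0) (v 1) * A (v (Fin.last z - 1)) (v (Fin.last z))| *
          ∏ s : Fin (z + 1),
            (if 2 ≤ (s : ℕ) ∧ (s : ℕ) ≤ z - 1 then A (v (s - 1)) (v s) else 1)
        else 0 := by
  obtain ⟨m, rfl⟩ : ∃ m, z = m + 2 := ⟨z - 2, by omega⟩
  clear hz
  have hL : (Fin.last (m+2) - 1 : Fin (m+2+1)) = (Fin.last (m+1)).castSucc := by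
    apply Fin.ext
    rw [Fin.coe_sub_one]
    have h : Fin.last (m+2) ≠ 0 := by simp [Fin.ext_iff]
    simp [h]
  have hws : dwt A e * WS A (m+1) e.1.1 e.1.2 f.1.1 f.1.2 * (dwt A f)⁻¹
      = dwt A e * (∑ v : Fin (m+2+1) → Fin n,
        if v 0 = e.1.1 ∧ v 1 = e.1.2 ∧ v ((Fin.last (m+1)).castSucc) = f.1.1 ∧
           v (Fin.last (m+2)) = f.1.2 ∧
           (∀ t : Fin (m+1), v t.castSucc.castSucc ≠ v t.succ.succ)
        then ∏ t : Fin (m+1), A (v t.succ.castSucc) (v t.succ.succ) else 0) * (dwt A f)⁻¹ := by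
    rw [WS_eq_sum A (m+1) e.1.1 e.1.2 f.1.1 f.1.2]
  rw [show m + 2 - 1 = m + 1 from rfl, pow_eq_WS hsym hdiag (m+1) e f, hws]
  clear hws
  rw [Finset.mul_sum, Finset.sum_mul]
  refine Finset.sum_congr rfl (fun v _ => ?_)
  have h0 : 0 < m + 3 := Nat.succ_pos _
  by_cases hC1 : (∀ i j : Fin (m+2+1), (j : ℕ) = (i : ℕ) + 1 → v i ≠ v j) ∧
      (∀ i j : Fin (m+2+1), (j : ℕ) = (i : ℕ) + 2 → v i ≠ v j) ∧
      v 0 = e.1.1 ∧ v 1 = e.1.2 ∧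
      v (Fin.last (m+2) - 1) = f.1.1 ∧ v (Fin.last (m+2)) = f.1.2
  · have hK : v 0 = e.1.1 ∧ v 1 = e.1.2 ∧ v ((Fin.last (m+1)).castSucc) = f.1.1 ∧
        v (Fin.last (m+2)) = f.1.2 ∧ (∀ t : Fin (m+1), v t.castSucc.castSucc ≠ v t.succ.succ) := by
      obtain ⟨h1, h2, h3, h4, h5, h6⟩ := hC1
      exact ⟨h3, h4, by rw [← hL]; exact h5, h6,
        fun t => h2 t.castSucc.castSucc t.succ.succ (by simp)⟩
    rw [if_pos hK, if_pos hC1]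
    obtain ⟨h3, h4, h5, h6, hnb⟩ := hK
    rw [hL, h3, h4, h5, h6]
    have hsplit : (∏ t : Fin (m+1), A (v t.succ.castSucc) (v t.succ.succ)) =
        (∏ t : Fin m, A (v t.castSucc.succ.castSucc) (v t.castSucc.succ.succ)) * A f.1.1 f.1.2 := by
      rw [Fin.prod_univ_castSucc]
      congr 1
      have e1 : (Fin.last m).succ.castSucc = (Fin.last (m+1)).castSucc := by
        apply Fin.ext; simp
      have e2 : (Fin.last m).succ.succ = Fin.last (m+2) := by
        apply Fin.ext; simp
      rw [e1, e2, h5, h6]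
    have hPst : (∏ s : Fin (m+2+1),
          if 2 ≤ (s:ℕ) ∧ (s:ℕ) ≤ m+1 then A (v (s-1)) (v s) else 1) =
        ∏ t : Fin m, A (v t.castSucc.succ.castSucc) (v t.castSucc.succ.succ) := by
      set vv : ℕ → Fin n := fun i => v ⟨i % (m+2+1), Nat.mod_lt _ h0⟩ with hvv
      have hvv_eq : ∀ (i : ℕ) (h : i < m+2+1), vv i = v ⟨i, h⟩ := by
        intro i h
        exact congrArg v (Fin.ext (Nat.mod_eq_of_lt h))
      have step1 : (∏ s : Fin (m+2+1),
            if 2 ≤ (s:ℕ) ∧ (s:ℕ) ≤ m+1 then A (v (s-1)) (v s) else 1) =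
          ∏ i ∈ Finset.range (m+2+1),
            (fun i => if 2 ≤ i ∧ i ≤ m+1 then A (vv (i-1)) (vv i) else 1) i := by
        rw [← Fin.prod_univ_eq_prod_range]
        refine Finset.prod_congr rfl (fun s _ => ?_)
        by_cases hs : 2 ≤ (s:ℕ) ∧ (s:ℕ) ≤ m+1
        · rw [if_pos hs, if_pos hs]
          have hs0 : s ≠ 0 := by
            intro hh
            rw [hh] at hs
            simp at hs
          have hcs : ((s - 1 : Fin (m+2+1)) : ℕ) = (s:ℕ) - 1 := by
            rw [Fin.coe_sub_one, if_neg hs0]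
          have i1 : vv ((s:ℕ)-1) = v (s - 1) := by
            rw [hvv_eq _ (by omega)]
            exact congrArg v (Fin.ext (by simp [hcs]))
          have i2 : vv (s:ℕ) = v s := by
            rw [hvv_eq _ s.isLt]
          rw [i1, i2]
        · rw [if_neg hs, if_neg hs]
      rw [step1, ← Finset.prod_filter]
      have hset : (Finset.range (m+2+1)).filter (fun i => 2 ≤ i ∧ i ≤ m+1)
          = (Finset.range m).image (fun i => i + 2) := by
        ext j
        simp only [Finset.mem_filter, Finset.mem_range, Finset.mem_image]
        constructor
        · rintro ⟨h1, h2, h3⟩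
          exact ⟨j - 2, by omega, by omega⟩
        · rintro ⟨i, hi, rfl⟩
          omega
      rw [hset, Finset.prod_image (fun x _ y _ h => by omega),
        ← Fin.prod_univ_eq_prod_range (fun i => A (vv (i + 2 - 1)) (vv (i + 2))) m]
      refine Finset.prod_congr rfl (fun t _ => ?_)
      have i1 : vv ((t:ℕ) + 2 - 1) = v t.castSucc.succ.castSucc := by
        rw [hvv_eq _ (by omega)]
        exact congrArg v (Fin.ext (by simp))
      have i2 : vv ((t:ℕ) + 2) = v t.castSucc.succ.succ := by
        rw [hvv_eq _ (by omega)]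
        exact congrArg v (Fin.ext (by simp))
      rw [i1, i2]
    rw [hsplit, hPst]
    have hk := key_f hsym hdiag f
    rw [dwt]
    rw [abs_mul, Real.sqrt_mul (abs_nonneg _)]
    set S1 := (if e.1.2 < e.1.1 then Real.sign (A e.1.2 e.1.1) else 1) with hS1
    set S2 := (if f.1.1 < f.1.2 then Real.sign (A f.1.1 f.1.2) else 1) with hS2
    set P := ∏ t : Fin m, A (v t.castSucc.succ.castSucc) (v t.castSucc.succ.succ) with hP
    linear_combination (S1 * Real.sqrt |A e.1.1 e.1.2| * P) * hk
  · rw [if_neg hC1]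
    by_cases hK : v 0 = e.1.1 ∧ v 1 = e.1.2 ∧ v ((Fin.last (m+1)).castSucc) = f.1.1 ∧
        v (Fin.last (m+2)) = f.1.2 ∧ (∀ t : Fin (m+1), v t.castSucc.castSucc ≠ v t.succ.succ)
    · rw [if_pos hK]
      have hcons : ¬(∀ i j : Fin (m+2+1), (j : ℕ) = (i : ℕ) + 1 → v i ≠ v j) := by
        intro hcons
        apply hC1
        refine ⟨hcons, ?_, hK.1, hK.2.1, by rw [hL]; exact hK.2.2.1, hK.2.2.2.1⟩
        intro i j hij
        have hjb := j.isLt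
        have him : (i:ℕ) < m + 1 := by omega
        have e1' : v i = v ((⟨(i:ℕ), him⟩ : Fin (m+1)).castSucc.castSucc) :=
          congrArg v (Fin.ext (by simp))
        have e2' : v j = v ((⟨(i:ℕ), him⟩ : Fin (m+1)).succ.succ) :=
          congrArg v (Fin.ext (by simp [hij]))
        rw [e1', e2']
        exact hK.2.2.2.2 _
      push_neg at hcons
      obtain ⟨i, j, hij, hvij⟩ := hcons
      have hjb := j.isLt
      rcases Nat.eq_zero_or_pos (i:ℕ) with hi0 | hipos
      · exfalso
        have ei : i = 0 := Fin.ext (by simp [hi0])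
        have ej : j = 1 := Fin.ext (by simp [hij, hi0])
        rw [ei, ej, hK.1, hK.2.1] at hvij
        exact e.2 (by rw [← hvij]; exact hdiag e.1.1)
      · have him : (i:ℕ) - 1 < m + 1 := by omega
        have ht1 : (⟨(i:ℕ)-1, him⟩ : Fin (m+1)).succ.castSucc = i := by
          apply Fin.ext; simp; omega
        have ht2 : (⟨(i:ℕ)-1, him⟩ : Fin (m+1)).succ.succ = j := by
          apply Fin.ext; simp; omega
        have hzero : A (v ((⟨(i:ℕ)-1, him⟩ : Fin (m+1)).succ.castSucc))
            (v ((⟨(i:ℕ)-1, him⟩ : Fin (m+1)).succ.succ)) = 0 := by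
          rw [ht1, ht2, hvij]
          exact hdiag _
        have hP0 : (∏ t : Fin (m+1), A (v t.succ.castSucc) (v t.succ.succ)) = 0 :=
          Finset.prod_eq_zero (Finset.mem_univ (⟨(i:ℕ)-1, him⟩ : Fin (m+1))) hzero
        rw [hP0, mul_zero, zero_mul]
    · rw [if_neg hK, mul_zero, zero_mul]


end
end

section
/- Let k ≥ 3 be odd. There exist constants C, C' > 0 such that for all sufficiently large n the following holds. Let T be a random order-k tensor on [n] with independent entries such that T_α = 0 whenever the indices of α ∈ [n]^k are not all distinct, and otherwise E[T_α] = 0, ℙ[T_α ≠ 0] ≤ p, and ℙ[c₀ ≤ |T_α| ≤ 1 | T_α ≠ 0] = 1 for an absolute constant c₀ > 0. If C·n^{-k/2} ≤ p ≤ n^{-k/2}·(log n)^{10}, then with probability greater than 0.99, max_{x ∈ {±1}^n} Σ_{α ∈ [n]^k} T_α·x^α ≤ C'·√p·n^{3k/4}. -/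
open MeasureTheory ProbabilityTheory Finset

lemma exp_quad {u : ℝ} (hu : |u| ≤ 1) : Real.exp u ≤ 1 + u + u ^ 2 := by
  have h := Real.exp_bound hu (n := 2) (by norm_num)
  have h2 : |u| ^ 2 = u ^ 2 := sq_abs u
  simp only [Finset.sum_range_succ, Finset.sum_range_zero, Nat.factorial] at h
  rw [abs_le] at h
  nlinarith [h.2, h.1]

lemma mgf_aux {Ω : Type} [MeasurableSpace Ω] {μ : Measure Ω} [IsProbabilityMeasure μ]
    {Y : Ω → ℝ} (hY : Measurable Y) (hb : ∀ᵐ ω ∂μ, |Y ω| ≤ 1)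
    (hmean : ∫ ω, Y ω ∂μ = 0) {v lam : ℝ} (hvar : ∫ ω, (Y ω) ^ 2 ∂μ ≤ v)
    (hl0 : 0 ≤ lam) (hl1 : lam ≤ 1) :
    mgf Y μ lam ≤ Real.exp (lam ^ 2 * v) := by
  have hYint : Integrable Y μ := by
    refine Integrable.mono' (integrable_const 1) hY.aestronglyMeasurable ?_
    filter_upwards [hb] with ω h using h
  have hY2int : Integrable (fun ω => (Y ω) ^ 2) μ := by
    refine Integrable.mono' (integrable_const 1) (hY.pow_const 2).aestronglyMeasurable ?_
    filter_upwards [hb] with ω h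
    rw [Real.norm_eq_abs, abs_pow]
    exact pow_le_one₀ (abs_nonneg _) h
  have hLHSint : Integrable (fun ω => Real.exp (lam * Y ω)) μ := by
    refine Integrable.mono' (integrable_const (Real.exp 1)) ((hY.const_mul lam).exp).aestronglyMeasurable ?_
    filter_upwards [hb] with ω h
    rw [Real.norm_eq_abs, abs_of_pos (Real.exp_pos _)]
    apply Real.exp_le_exp.2
    calc lam * Y ω ≤ |lam * Y ω| := le_abs_self _
      _ = |lam| * |Y ω| := abs_mul _ _
      _ ≤ 1 * 1 := by
          apply mul_le_mul (by rwa [abs_of_nonneg hl0]) h (abs_nonneg _) zero_le_one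
      _ = 1 := one_mul 1
  have hexp_le : ∀ᵐ ω ∂μ, Real.exp (lam * Y ω) ≤ 1 + lam * Y ω + lam ^ 2 * (Y ω) ^ 2 := by
    filter_upwards [hb] with ω h
    have habs : |lam * Y ω| ≤ 1 := by
      rw [abs_mul]
      calc |lam| * |Y ω| ≤ 1 * 1 := by
            apply mul_le_mul (by rwa [abs_of_nonneg hl0]) h (abs_nonneg _) zero_le_one
        _ = 1 := one_mul 1
    have := exp_quad habs
    calc Real.exp (lam * Y ω) ≤ 1 + lam * Y ω + (lam * Y ω) ^ 2 := this
      _ = 1 + lam * Y ω + lam ^ 2 * (Y ω) ^ 2 := by ring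
  have hRHSint : Integrable (fun ω => 1 + lam * Y ω + lam ^ 2 * (Y ω) ^ 2) μ :=
    ((integrable_const 1).add (hYint.const_mul lam)).add (hY2int.const_mul _)
  calc mgf Y μ lam = ∫ ω, Real.exp (lam * Y ω) ∂μ := rfl
    _ ≤ ∫ ω, (1 + lam * Y ω + lam ^ 2 * (Y ω) ^ 2) ∂μ :=
        integral_mono_ae hLHSint hRHSint hexp_le
    _ = 1 + lam * ∫ ω, Y ω ∂μ + lam ^ 2 * ∫ ω, (Y ω) ^ 2 ∂μ := by
        have hint1 : Integrable (fun ω => 1 + lam * Y ω) μ :=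
          (integrable_const 1).add (hYint.const_mul lam)
        have hint2 : Integrable (fun ω => lam ^ 2 * (Y ω) ^ 2) μ := hY2int.const_mul _
        have hint3 : Integrable (fun ω => lam * Y ω) μ := hYint.const_mul lam
        rw [integral_add hint1 hint2, integral_add (integrable_const 1) hint3,
          integral_const, integral_const_mul, integral_const_mul]
        simp
    _ = 1 + lam ^ 2 * ∫ ω, (Y ω) ^ 2 ∂μ := by rw [hmean]; ring
    _ ≤ 1 + lam ^ 2 * v := by nlinarith [sq_nonneg lam]
    _ ≤ Real.exp (lam ^ 2 * v) := by
        have := Real.add_one_le_exp (lam ^ 2 * v); linarith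

lemma tail_bound {k n : ℕ} {Ω : Type} [MeasurableSpace Ω] {μ : Measure Ω}
    [IsProbabilityMeasure μ]
    (T : Ω → (Fin k → Fin n) → ℝ) (hT : Measurable T)
    (hmean : ∀ α : Fin k → Fin n, ∫ ω, T ω α ∂μ = 0)
    (p : ℝ) (hp0 : 0 ≤ p)
    (hptail : ∀ α : Fin k → Fin n, μ {ω | T ω α ≠ 0} ≤ ENNReal.ofReal p)
    (hbdd : ∀ α : Fin k → Fin n, ∀ᵐ ω ∂μ, |T ω α| ≤ 1)
    (hind : iIndepFun (fun (α : Fin k → Fin n) (ω : Ω) => T ω α) μ)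
    (x : Fin n → ℝ) (hx : ∀ i, x i = 1 ∨ x i = -1)
    (lam t : ℝ) (hl0 : 0 ≤ lam) (hl1 : lam ≤ 1) :
    (μ {ω | t ≤ ∑ α : Fin k → Fin n, T ω α * ∏ i, x (α i)}).toReal ≤
      Real.exp (-lam * t + (Fintype.card (Fin k → Fin n) : ℝ) * (lam ^ 2 * p)) := by
  set c : (Fin k → Fin n) → ℝ := fun α => ∏ i, x (α i) with hc_def
  have hxabs : ∀ i, |x i| = 1 := by
    intro i; rcases hx i with h | h <;> simp [h]
  have hcabs : ∀ α, |c α| = 1 := by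
    intro α
    rw [hc_def]
    simp only
    rw [Finset.abs_prod]
    simp [hxabs]
  set Y : (Fin k → Fin n) → Ω → ℝ := fun α ω => T ω α * c α with hY_def
  have hTmeas : ∀ α : Fin k → Fin n, Measurable (fun ω => T ω α) := fun α =>
    (measurable_pi_apply α).comp hT
  have hYmeas : ∀ α, Measurable (Y α) := fun α => (hTmeas α).mul_const _
  have hYb : ∀ α, ∀ᵐ ω ∂μ, |Y α ω| ≤ 1 := by
    intro α
    filter_upwards [hbdd α] with ω h
    rw [hY_def]
    simp only
    rw [abs_mul, hcabs, mul_one]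
    exact h
  have hYmean : ∀ α, ∫ ω, Y α ω ∂μ = 0 := by
    intro α
    rw [hY_def]
    simp only
    rw [integral_mul_const, hmean α, zero_mul]
  have hYvar : ∀ α, ∫ ω, (Y α ω) ^ 2 ∂μ ≤ p := by
    intro α
    have hc2 : c α ^ 2 = 1 := by
      rw [← sq_abs, hcabs, one_pow]
    have heq : ∀ ω, (Y α ω) ^ 2 = (T ω α) ^ 2 := by
      intro ω; rw [hY_def]; simp only; rw [mul_pow, hc2, mul_one]
    simp only [heq]
    have hs : MeasurableSet {ω | T ω α ≠ 0} :=
      (hTmeas α) (measurableSet_singleton 0).compl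
    have hmono : ∀ᵐ ω ∂μ, (T ω α) ^ 2 ≤ Set.indicator {ω | T ω α ≠ 0} (fun _ => (1 : ℝ)) ω := by
      filter_upwards [hbdd α] with ω h
      by_cases h0 : T ω α = 0
      · simp [h0, Set.indicator_nonneg]
      · rw [Set.indicator_of_mem (by exact h0)]
        rw [← sq_abs]
        exact pow_le_one₀ (abs_nonneg _) h
    have hT2int : Integrable (fun ω => (T ω α) ^ 2) μ := by
      refine Integrable.mono' (integrable_const 1) ((hTmeas α).pow_const 2).aestronglyMeasurable ?_
      filter_upwards [hbdd α] with ω h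
      rw [Real.norm_eq_abs, abs_pow]
      exact pow_le_one₀ (abs_nonneg _) h
    calc ∫ ω, (T ω α) ^ 2 ∂μ
        ≤ ∫ ω, Set.indicator {ω | T ω α ≠ 0} (fun _ => (1 : ℝ)) ω ∂μ :=
          integral_mono_ae hT2int ((integrable_const 1).indicator hs) hmono
      _ = (μ {ω | T ω α ≠ 0}).toReal • (1 : ℝ) := integral_indicator_const (1 : ℝ) hs
      _ = (μ {ω | T ω α ≠ 0}).toReal := by rw [smul_eq_mul, mul_one]
      _ ≤ p := ENNReal.toReal_le_of_le_ofReal hp0 (hptail α)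
  have hYind : iIndepFun Y μ :=
    hind.comp (fun α y => y * c α) (fun α => measurable_id.mul_const _)
  have hset : {ω | t ≤ ∑ α : Fin k → Fin n, T ω α * ∏ i, x (α i)} =
      {ω | t ≤ (∑ α : Fin k → Fin n, Y α) ω} := by
    ext ω
    simp [hY_def, hc_def, Finset.sum_apply]
  rw [hset]
  have hcard : ∀ᵐ ω ∂μ, (∑ α : Fin k → Fin n, Y α) ω ≤ (Fintype.card (Fin k → Fin n) : ℝ) := by
    have := MeasureTheory.ae_all_iff.2 hYb
    filter_upwards [this] with ω h
    rw [Finset.sum_apply]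
    calc ∑ α : Fin k → Fin n, Y α ω ≤ ∑ α : Fin k → Fin n, (1 : ℝ) := by
          apply Finset.sum_le_sum
          intro α _
          exact le_trans (le_abs_self _) (h α)
      _ = (Fintype.card (Fin k → Fin n) : ℝ) := by simp
  have hSmeas : Measurable (∑ α : Fin k → Fin n, Y α) := by
    have : Measurable fun ω => ∑ α : Fin k → Fin n, Y α ω :=
      Finset.measurable_sum Finset.univ fun α _ => hYmeas α
    have heq : (∑ α : Fin k → Fin n, Y α) = fun ω => ∑ α : Fin k → Fin n, Y α ω := by
      funext ω; simp [Finset.sum_apply]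
    rw [heq]; exact this
  have hint : Integrable (fun ω => Real.exp (lam * (∑ α : Fin k → Fin n, Y α) ω)) μ := by
    refine Integrable.mono' (integrable_const (Real.exp (lam * (Fintype.card (Fin k → Fin n) : ℝ))))
      ((hSmeas.const_mul lam).exp).aestronglyMeasurable ?_
    filter_upwards [hcard] with ω h
    rw [Real.norm_eq_abs, abs_of_pos (Real.exp_pos _)]
    exact Real.exp_le_exp.2 (mul_le_mul_of_nonneg_left h hl0)
  calc (μ {ω | t ≤ (∑ α : Fin k → Fin n, Y α) ω}).toReal
      ≤ Real.exp (-lam * t) * mgf (∑ α : Fin k → Fin n, Y α) μ lam :=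
        measure_ge_le_exp_mul_mgf t hl0 hint
    _ ≤ Real.exp (-lam * t) * Real.exp ((Fintype.card (Fin k → Fin n) : ℝ) * (lam ^ 2 * p)) := by
        apply mul_le_mul_of_nonneg_left _ (Real.exp_pos _).le
        rw [hYind.mgf_sum hYmeas]
        calc ∏ α : Fin k → Fin n, mgf (Y α) μ lam
            ≤ ∏ _α : Fin k → Fin n, Real.exp (lam ^ 2 * p) := by
              apply Finset.prod_le_prod
              · intro α _; exact mgf_nonneg
              · intro α _
                exact mgf_aux (hYmeas α) (hYb α) (hYmean α) (hYvar α) hl0 hl1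
          _ = Real.exp (lam ^ 2 * p) ^ (Fintype.card (Fin k → Fin n)) := by
              rw [Finset.prod_const, Finset.card_univ]
          _ = Real.exp ((Fintype.card (Fin k → Fin n) : ℝ) * (lam ^ 2 * p)) := by
              rw [← Real.exp_nat_mul]
    _ = Real.exp (-lam * t + (Fintype.card (Fin k → Fin n) : ℝ) * (lam ^ 2 * p)) :=
        (Real.exp_add _ _).symm

set_option maxHeartbeats 2000000

/-- **Sharp bounds for random polynomials** (Theorem 5.2).
For odd `k ≥ 3` and a random order-`k` tensor `T` with independent entries, mean zero,
`ℙ[T_α ≠ 0] ≤ p` and `c₀ ≤ |T_α| ≤ 1` conditioned on `T_α ≠ 0` (entries with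
non-distinct indices vanish): if `C·n^{-k/2} ≤ p ≤ n^{-k/2}·(log n)^{10}`, then with
probability greater than `0.99`,
`max_{x ∈ {±1}^n} ∑_α T_α x^α ≤ C'·√p·n^{3k/4}`. -/
theorem sharp_bounds_random_polynomials (k : ℕ) (hk : 3 ≤ k) (hkodd : Odd k)
    (c₀ : ℝ) (hc₀ : 0 < c₀) :
    ∃ C C' : ℝ, 0 < C ∧ 0 < C' ∧
    ∃ N : ℕ, ∀ n : ℕ, N ≤ n →
    ∀ p : ℝ, C * (n : ℝ) ^ (-(k : ℝ) / 2) ≤ p →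
      p ≤ (n : ℝ) ^ (-(k : ℝ) / 2) * Real.log n ^ (10 : ℕ) →
    ∀ (Ω : Type) (_ : MeasurableSpace Ω) (μ : Measure Ω), IsProbabilityMeasure μ →
    ∀ T : Ω → (Fin k → Fin n) → ℝ,
      Measurable T →
      -- entries with non-distinct indices vanish
      (∀ ω (α : Fin k → Fin n), ¬ Function.Injective α → T ω α = 0) →
      -- remaining entries have mean zero
      (∀ α : Fin k → Fin n, Function.Injective α → ∫ ω, T ω α ∂μ = 0) →
      -- each entry is nonzero with probability at most p
      (∀ α : Fin k → Fin n, μ {ω | T ω α ≠ 0} ≤ ENNReal.ofReal p) →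
      -- conditioned on being nonzero, `c₀ ≤ |T_α| ≤ 1` almost surely
      (∀ α : Fin k → Fin n, ∀ᵐ ω ∂μ, T ω α ≠ 0 → c₀ ≤ |T ω α| ∧ |T ω α| ≤ 1) →
      -- the entries are mutually independent
      iIndepFun
        (fun (α : Fin k → Fin n) (ω : Ω) => T ω α) μ →
      ENNReal.ofReal 0.99 <
        μ {ω | ∀ x : Fin n → ℝ, (∀ i, x i = 1 ∨ x i = -1) →
            (∑ α : Fin k → Fin n, T ω α * ∏ i, x (α i)) ≤
              C' * Real.sqrt p * (n : ℝ) ^ (3 * (k : ℝ) / 4)} := by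
  classical
  refine ⟨9, 3, by norm_num, by norm_num, 16, ?_⟩
  intro n hn p hplow _hphigh Ω mΩ μ hμ T hT hvanish hmean htail hcond hind
  haveI := hμ
  have hn16 : (16 : ℝ) ≤ n := by exact_mod_cast hn
  have hn0 : (0 : ℝ) < n := by linarith
  have hn1 : (1 : ℝ) ≤ n := by linarith
  set m : ℝ := (n : ℝ) ^ ((k : ℝ) / 4) with hm_def
  have hm0 : 0 < m := Real.rpow_pos_of_pos hn0 _
  have hmpow : ∀ r : ℕ, m ^ r = (n : ℝ) ^ ((k : ℝ) / 4 * r) := by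
    intro r
    rw [hm_def, ← Real.rpow_natCast ((n : ℝ) ^ ((k : ℝ) / 4)) r, ← Real.rpow_mul hn0.le]
  have hm4 : ((n : ℝ)) ^ (k : ℕ) = m ^ 4 := by
    rw [hmpow 4, ← Real.rpow_natCast (n : ℝ) k]
    norm_num
  have hm3 : (n : ℝ) ^ (3 * (k : ℝ) / 4) = m ^ 3 := by
    rw [hmpow 3]; ring_nf
  have hm2 : (n : ℝ) ^ ((k : ℝ) / 2) = m ^ 2 := by
    rw [hmpow 2]; ring_nf
  have hmneg : (n : ℝ) ^ (-(k : ℝ) / 2) = (m ^ 2)⁻¹ := by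
    rw [neg_div, Real.rpow_neg hn0.le, hm2]
  rw [hmneg] at hplow
  have hp0 : 0 < p := lt_of_lt_of_le (by positivity) hplow
  set s := Real.sqrt p with hs_def
  have hs0 : 0 < s := Real.sqrt_pos.2 hp0
  have hs2 : s ^ 2 = p := Real.sq_sqrt hp0.le
  have hs_lb : 3 / m ≤ s := by
    rw [hs_def, Real.le_sqrt (by positivity) hp0.le]
    calc (3 / m) ^ 2 = 9 * (m ^ 2)⁻¹ := by field_simp; norm_num
      _ ≤ p := hplow
  set lam := 3 / (2 * s * m) with hlam_def
  have hlam0 : 0 < lam := by positivity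
  have hsm : 3 ≤ s * m := by rwa [div_le_iff₀ hm0] at hs_lb
  have hlam1 : lam ≤ 1 := by
    rw [hlam_def, div_le_one (by positivity)]
    nlinarith
  have hmeanall : ∀ α : Fin k → Fin n, ∫ ω, T ω α ∂μ = 0 := by
    intro α
    by_cases hα : Function.Injective α
    · exact hmean α hα
    · simp [hvanish _ _ hα]
  have hbdd : ∀ α : Fin k → Fin n, ∀ᵐ ω ∂μ, |T ω α| ≤ 1 := by
    intro α
    filter_upwards [hcond α] with ω h
    by_cases h0 : T ω α = 0
    · simp [h0]
    · exact (h h0).2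
  set t' : ℝ := 3 * s * m ^ 3 with ht_def
  have htstmt : 3 * Real.sqrt p * (n : ℝ) ^ (3 * (k : ℝ) / 4) = t' := by
    rw [hm3]
  set xb : (Fin n → Bool) → Fin n → ℝ := fun b i => if b i then 1 else -1 with hxb_def
  have hxb : ∀ b i, xb b i = 1 ∨ xb b i = -1 := by
    intro b i; by_cases h : b i <;> simp [hxb_def, h]
  set Bad : (Fin n → Bool) → Set Ω :=
    fun b => {ω | t' ≤ ∑ α : Fin k → Fin n, T ω α * ∏ i, xb b (α i)} with hBad_def
  have hBadMeas : ∀ b, MeasurableSet (Bad b) := by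
    intro b
    have hf : Measurable fun ω => ∑ α : Fin k → Fin n, T ω α * ∏ i, xb b (α i) :=
      Finset.measurable_sum Finset.univ fun α _ =>
        ((measurable_pi_apply α).comp hT).mul_const _
    exact measurableSet_le measurable_const hf
  have hcard : (Fintype.card (Fin k → Fin n) : ℝ) = m ^ 4 := by
    rw [show Fintype.card (Fin k → Fin n) = n ^ k from by simp [Fintype.card_fun]]
    push_cast
    exact hm4
  have hexp_eq : -lam * t' + (Fintype.card (Fin k → Fin n) : ℝ) * (lam ^ 2 * p) =
      -(9 / 4) * m ^ 2 := by
    rw [hcard, ht_def, hlam_def, ← hs2]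
    field_simp
    ring
  have hbadbound : ∀ b, μ (Bad b) ≤ ENNReal.ofReal (Real.exp (-(9 / 4) * m ^ 2)) := by
    intro b
    have h1 := tail_bound T hT hmeanall p hp0.le htail hbdd hind (xb b) (hxb b)
      lam t' hlam0.le hlam1
    rw [hexp_eq] at h1
    calc μ (Bad b) = ENNReal.ofReal ((μ (Bad b)).toReal) :=
          (ENNReal.ofReal_toReal (measure_ne_top μ _)).symm
      _ ≤ ENNReal.ofReal (Real.exp (-(9 / 4) * m ^ 2)) := ENNReal.ofReal_le_ofReal h1
  set B := ⋃ b : Fin n → Bool, Bad b with hB_def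
  have hBmeas : MeasurableSet B := MeasurableSet.iUnion fun b => hBadMeas b
  have hm2lb : (4 : ℝ) * n ≤ m ^ 2 := by
    have h1 : ((n : ℝ)) ^ ((3 : ℝ) / 2) ≤ (n : ℝ) ^ ((k : ℝ) / 2) := by
      apply Real.rpow_le_rpow_of_exponent_le hn1
      have : (3 : ℝ) ≤ k := by exact_mod_cast hk
      linarith
    have h2 : (n : ℝ) ^ ((3 : ℝ) / 2) = n * Real.sqrt n := by
      rw [Real.sqrt_eq_rpow, show (3 : ℝ) / 2 = 1 + 1 / 2 by norm_num,
        Real.rpow_add hn0, Real.rpow_one]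
    have h3 : (4 : ℝ) ≤ Real.sqrt n := by
      rw [show (4 : ℝ) = Real.sqrt 16 by
        rw [show (16 : ℝ) = 4 ^ 2 by norm_num, Real.sqrt_sq (by norm_num)]]
      exact Real.sqrt_le_sqrt hn16
    calc (4 : ℝ) * n ≤ Real.sqrt n * n := by nlinarith
      _ = n * Real.sqrt n := mul_comm _ _
      _ = (n : ℝ) ^ ((3 : ℝ) / 2) := h2.symm
      _ ≤ (n : ℝ) ^ ((k : ℝ) / 2) := h1
      _ = m ^ 2 := hm2
  have h2exp : (2 : ℝ) ^ n ≤ Real.exp n := by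
    have h2e : (2 : ℝ) ≤ Real.exp 1 := by
      have := Real.add_one_le_exp (1 : ℝ); linarith
    calc (2 : ℝ) ^ n ≤ (Real.exp 1) ^ n := pow_le_pow_left₀ (by norm_num) h2e n
      _ = Real.exp n := by rw [← Real.exp_nat_mul, mul_one]
  have hreal : (2 : ℝ) ^ n * Real.exp (-(9 / 4) * m ^ 2) ≤ 0.005 := by
    have he1 : Real.exp (-(9 / 4) * m ^ 2) ≤ Real.exp (-(9 : ℝ) * n) := by
      apply Real.exp_le_exp.2; linarith
    have hx : (200 : ℝ) ≤ Real.exp 128 := by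
      have h64 : (65 : ℝ) ≤ Real.exp 64 := by
        have := Real.add_one_le_exp (64 : ℝ); linarith
      have heq : Real.exp 128 = Real.exp 64 * Real.exp 64 := by
        rw [← Real.exp_add]; norm_num
      nlinarith [Real.exp_pos (64 : ℝ)]
    have hlast : Real.exp (-(128 : ℝ)) ≤ 0.005 := by
      rw [Real.exp_neg]
      have := inv_anti₀ (show (0 : ℝ) < 200 by norm_num) hx
      calc (Real.exp 128)⁻¹ ≤ (200 : ℝ)⁻¹ := this
        _ ≤ 0.005 := by norm_num
    calc (2 : ℝ) ^ n * Real.exp (-(9 / 4) * m ^ 2) ≤ Real.exp n * Real.exp (-9 * n) :=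
        mul_le_mul h2exp he1 (Real.exp_pos _).le (Real.exp_pos _).le
      _ = Real.exp (n + -9 * n) := (Real.exp_add _ _).symm
      _ ≤ Real.exp (-(128 : ℝ)) := by
          apply Real.exp_le_exp.2; linarith
      _ ≤ 0.005 := hlast
  have hBbound : μ B ≤ ENNReal.ofReal 0.005 := by
    calc μ B ≤ ∑ b : Fin n → Bool, μ (Bad b) := measure_iUnion_fintype_le μ Bad
      _ ≤ ∑ _b : Fin n → Bool, ENNReal.ofReal (Real.exp (-(9 / 4) * m ^ 2)) :=
          Finset.sum_le_sum fun b _ => hbadbound b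
      _ = (Fintype.card (Fin n → Bool)) • ENNReal.ofReal (Real.exp (-(9 / 4) * m ^ 2)) := by
          rw [Finset.sum_const, Finset.card_univ]
      _ = ENNReal.ofReal ((2 : ℝ) ^ n * Real.exp (-(9 / 4) * m ^ 2)) := by
          rw [nsmul_eq_mul, ENNReal.ofReal_mul (by positivity)]
          congr 1
          rw [show Fintype.card (Fin n → Bool) = 2 ^ n from by simp [Fintype.card_fun]]
          rw [← ENNReal.ofReal_natCast (2 ^ n)]
          congr 1
          push_cast
          ring
      _ ≤ ENNReal.ofReal 0.005 := ENNReal.ofReal_le_ofReal hreal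
  have hGood : Bᶜ ⊆ {ω | ∀ x : Fin n → ℝ, (∀ i, x i = 1 ∨ x i = -1) →
      (∑ α : Fin k → Fin n, T ω α * ∏ i, x (α i)) ≤
        3 * Real.sqrt p * (n : ℝ) ^ (3 * (k : ℝ) / 4)} := by
    intro ω hω x hx
    have hbx : x = xb (fun i => if x i = 1 then true else false) := by
      funext i
      rcases hx i with h | h
      · simp [hxb_def, h]
      · have hne : ¬(x i = 1) := by rw [h]; norm_num
        simp [hxb_def, hne, h]
    rw [htstmt, hbx]
    by_contra hcon
    push_neg at hcon
    refine hω (Set.mem_iUnion.2 ⟨fun i => if x i = 1 then true else false, ?_⟩)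
    exact le_of_lt hcon
  have hcompl : μ Bᶜ = 1 - μ B := prob_compl_eq_one_sub hBmeas
  calc ENNReal.ofReal 0.99 < ENNReal.ofReal 0.995 := by
        rw [ENNReal.ofReal_lt_ofReal_iff (by norm_num)]; norm_num
    _ = 1 - ENNReal.ofReal 0.005 := by
        rw [← ENNReal.ofReal_one, ← ENNReal.ofReal_sub 1 (by norm_num : (0 : ℝ) ≤ 0.005)]
        congr 1
        norm_num
    _ ≤ 1 - μ B := tsub_le_tsub_left hBbound 1
    _ = μ Bᶜ := hcompl.symm
    _ ≤ _ := measure_mono hGood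
end
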